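/- arXiv:2007.05139 — 2 statements merged into one kernel-verified Lean document; each statement's English description precedes it below -/
import Mathlib

section
/- Deterministic erasure in the XOR construction (Lemma 1): for the distribution p(x; U, 𝒮) and sensitive set K = {m+1,…,m+k}, and for any permutation (o_1,…,o_{m+k}) of {1,…,m+k}, the sequential privacy mechanism applied in the order o_1,…,o_{m+k} has deterministic erasure decisions: at every step i, the conditional probability of erasure w(y_{o_i} = ∗ | x_{o_i}, x_K, y_{o_{[i−1]}}) is either 0 or 1, for every realization occurring with positive probability. -/
open Finset
open scoped Classical

noncomputable section

namespace GenotypeHiding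

variable {X : Type} [Fintype X] [DecidableEq X]

/-- Restriction of a sequence `x` to the sensitive positions `K`. -/
def restr {n : ℕ} (K : Finset (Fin n)) (x : Fin n → X) : ↥K → X := fun i => x (i : Fin n)

/-- `y` agrees with the history `h` on all already-visited coordinates (those satisfying
the predicate `vis`). -/
def agreeV {n : ℕ} (vis : Fin n → Prop) (y h : Fin n → Option X) : Prop :=
  ∀ j : Fin n, vis j → y j = h j

/-- The coordinates visited before step `t` when processing in the order
`σ 0, σ 1, …` given by the permutation `σ`. -/
def visOrd {n : ℕ} (σ : Equiv.Perm (Fin n)) (t : ℕ) : Fin n → Prop :=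
  fun j => ((σ.symm j : Fin n) : ℕ) < t

/-- `P(X = x, Y = h on the visited coordinates)` under the joint law `J` of `(X, Y)`. -/
def prXH {n : ℕ} (J : (Fin n → X) → (Fin n → Option X) → ℝ) (vis : Fin n → Prop)
    (x : Fin n → X) (h : Fin n → Option X) : ℝ :=
  ∑ y : Fin n → Option X, if agreeV vis y h then J x y else 0

/-- `P(Y_i = b, X = x, Y = h on the visited coordinates)` under the joint law `J`. -/
def prXHY {n : ℕ} (J : (Fin n → X) → (Fin n → Option X) → ℝ) (vis : Fin n → Prop)
    (x : Fin n → X) (h : Fin n → Option X) (i : Fin n) (b : Option X) : ℝ :=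
  ∑ y : Fin n → Option X, if y i = b ∧ agreeV vis y h then J x y else 0

/-- `P(X_K = u, Y = h on the visited coordinates)` under the joint law `J`. -/
def prKH {n : ℕ} (J : (Fin n → X) → (Fin n → Option X) → ℝ) (K : Finset (Fin n))
    (vis : Fin n → Prop) (u : ↥K → X) (h : Fin n → Option X) : ℝ :=
  ∑ x : Fin n → X, ∑ y : Fin n → Option X,
    if restr K x = u ∧ agreeV vis y h then J x y else 0

/-- `P(X_i = a, X_K = u, Y = h on the visited coordinates)` under the joint law `J`. -/
def prIKH {n : ℕ} (J : (Fin n → X) → (Fin n → Option X) → ℝ) (K : Finset (Fin n))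
    (vis : Fin n → Prop) (i : Fin n) (a : X) (u : ↥K → X) (h : Fin n → Option X) : ℝ :=
  ∑ x : Fin n → X, ∑ y : Fin n → Option X,
    if x i = a ∧ restr K x = u ∧ agreeV vis y h then J x y else 0

/-- `P(X_i = a | X_K = u, Y = h on the visited coordinates)` under the joint law `J`. -/
def condX {n : ℕ} (J : (Fin n → X) → (Fin n → Option X) → ℝ) (K : Finset (Fin n))
    (vis : Fin n → Prop) (i : Fin n) (a : X) (u : ↥K → X) (h : Fin n → Option X) : ℝ :=
  prIKH J K vis i a u h / prKH J K vis u h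

/-- `min_u P(X_i = a | X_K = u, Y = h on visited)`, the minimum over all `u` with
positive probability. -/
def minC {n : ℕ} (J : (Fin n → X) → (Fin n → Option X) → ℝ) (K : Finset (Fin n))
    (vis : Fin n → Prop) (i : Fin n) (a : X) (h : Fin n → Option X) : ℝ :=
  sInf {r : ℝ | ∃ u : ↥K → X, 0 < prKH J K vis u h ∧ r = condX J K vis i a u h}

/-- `J` is the joint law of `(X, Y)` where `Y` is generated from `X ∼ p` by the
sequential privacy mechanism processing the coordinates in the order
`σ 0, σ 1, …, σ (n-1)`. -/
def IsSequentialMechanismOrd {n : ℕ} (p : (Fin n → X) → ℝ) (K : Finset (Fin n))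
    (σ : Equiv.Perm (Fin n)) (J : (Fin n → X) → (Fin n → Option X) → ℝ) : Prop :=
  (∀ x y, 0 ≤ J x y) ∧
  (∀ x, ∑ y : Fin n → Option X, J x y = p x) ∧
  (∀ x y, 0 < J x y → ∀ i : Fin n, y i = some (x i) ∨ y i = none) ∧
  (∀ (t : Fin n) (x : Fin n → X) (h : Fin n → Option X),
    0 < prXH J (visOrd σ (t : ℕ)) x h →
    prXHY J (visOrd σ (t : ℕ)) x h (σ t) (some (x (σ t)))
      = (minC J K (visOrd σ (t : ℕ)) (σ t) (x (σ t)) h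
          / condX J K (visOrd σ (t : ℕ)) (σ t) (x (σ t)) (restr K x) h)
          * prXH J (visOrd σ (t : ℕ)) x h)

/-- The edge set of the bipartite graph: pairs `(i, j)` with `i ∈ S j`.  Each edge
carries an independent uniform random bit `b_{i,j}`. -/
def Edge {m k : ℕ} (S : Fin k → Finset (Fin m)) : Type :=
  {q : Fin m × Fin k // q.1 ∈ S q.2}

instance {m k : ℕ} (S : Fin k → Finset (Fin m)) : Fintype (Edge S) := by
  unfold Edge; infer_instance

/-- `X_i` for `i ∈ {1,…,m}`: the tuple of bits `(b_{i,j})_{j : i ∈ S_j}` (padded by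
`false` outside the coordinates `j` with `i ∈ S j`). -/
def Xlow {m k : ℕ} (S : Fin k → Finset (Fin m)) (b : Edge S → Bool) (i : Fin m) :
    Fin k → Bool :=
  fun j => if h : i ∈ S j then b ⟨(i, j), h⟩ else false

/-- The XOR parity `⊕_{i ∈ S_j} b_{i,j}`. -/
def parity {m k : ℕ} (S : Fin k → Finset (Fin m)) (b : Edge S → Bool) (j : Fin k) :
    Bool :=
  decide ((((S j).attach.filter (fun i => b ⟨(i.1, j), i.2⟩)).card) % 2 = 1)

/-- The sequence `X = (X_1, …, X_{m+k})` of the XOR construction, as a function of the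
random bits: the first `m` coordinates are the tuples `X_i = (b_{i,j})_{j : i ∈ S_j}` and
the last `k` coordinates encode the parities `X_{m+j} = ⊕_{i ∈ S_j} b_{i,j}` (as constant
tuples). -/
def seqOf {m k : ℕ} (S : Fin k → Finset (Fin m)) (b : Edge S → Bool) :
    Fin (m + k) → (Fin k → Bool) :=
  fun i =>
    if h : (i : ℕ) < m then Xlow S b ⟨(i : ℕ), h⟩
    else fun _ => parity S b ⟨(i : ℕ) - m, by omega⟩

/-- The data distribution `p(x; U, 𝒮)` of the XOR construction: the law of
`seqOf S b` for independent uniform random bits `b`. -/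
def pXor {m k : ℕ} (S : Fin k → Finset (Fin m)) :
    (Fin (m + k) → (Fin k → Bool)) → ℝ :=
  fun x => ∑ b : Edge S → Bool,
    if seqOf S b = x then (1 / 2 : ℝ) ^ (Fintype.card (Edge S)) else 0

/-- The sensitive set `K = {m+1, …, m+k}` of the XOR construction. -/
def sensXor (m k : ℕ) : Finset (Fin (m + k)) :=
  Finset.univ.filter (fun i : Fin (m + k) => m ≤ (i : ℕ))

----------------------------------------------------------------
-- Part 1 : xor algebra
----------------------------------------------------------------

/-- pointwise xor of sequences -/
def xo {n k : ℕ} (a b : Fin n → (Fin k → Bool)) : Fin n → (Fin k → Bool) :=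
  fun i j => xor (a i j) (b i j)

def bxo {m k : ℕ} {S : Fin k → Finset (Fin m)} (a b : Edge S → Bool) : Edge S → Bool :=
  fun e => xor (a e) (b e)

def toZ : Bool → ZMod 2 := fun b => if b then 1 else 0

lemma toZ_xor (a b : Bool) : toZ (xor a b) = toZ a + toZ b := by
  cases a <;> cases b <;> decide

lemma toZ_inj {a b : Bool} (h : toZ a = toZ b) : a = b := by
  cases a <;> cases b <;> simp_all [toZ]

lemma card_filter_zmod {α : Type*} (T : Finset α) (f : α → Bool) :
    (((T.filter (fun a => f a = true)).card : ZMod 2)) = ∑ a ∈ T, toZ (f a) := by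
  rw [Finset.card_filter]
  push_cast
  apply Finset.sum_congr rfl
  intro a _
  cases f a <;> simp [toZ]

lemma toZ_mod2 (c : ℕ) : toZ (decide (c % 2 = 1)) = (c : ZMod 2) := by
  rw [← ZMod.natCast_mod c 2]
  rcases Nat.mod_two_eq_zero_or_one c with h | h <;> rw [h] <;> simp [toZ]

lemma toZ_parity {m k : ℕ} (S : Fin k → Finset (Fin m)) (b : Edge S → Bool) (j : Fin k) :
    toZ (parity S b j) = ∑ i ∈ (S j).attach, toZ (b ⟨(i.1, j), i.2⟩) := by
  rw [← card_filter_zmod]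
  unfold parity
  rw [toZ_mod2]

lemma parity_xor {m k : ℕ} (S : Fin k → Finset (Fin m)) (a b : Edge S → Bool) (j : Fin k) :
    parity S (bxo a b) j = xor (parity S a j) (parity S b j) := by
  apply toZ_inj
  rw [toZ_xor, toZ_parity, toZ_parity, toZ_parity, ← Finset.sum_add_distrib]
  apply Finset.sum_congr rfl
  intro i _
  exact toZ_xor _ _

lemma seqOf_xor {m k : ℕ} (S : Fin k → Finset (Fin m)) (a b : Edge S → Bool) :
    seqOf S (bxo a b) = xo (seqOf S a) (seqOf S b) := by
  funext i j
  unfold seqOf xo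
  by_cases h : (i : ℕ) < m
  · simp only [h, dif_pos]
    unfold Xlow bxo
    by_cases hs : (⟨(i : ℕ), h⟩ : Fin m) ∈ S j
    · simp [hs]
    · simp [hs]
  · simp only [h, dif_neg, not_false_iff]
    exact parity_xor S a b _

lemma seqOf_injective {m k : ℕ} (S : Fin k → Finset (Fin m)) :
    Function.Injective (seqOf S) := by
  intro a b hab
  funext e
  obtain ⟨⟨i, j⟩, he⟩ := e
  have hi : ((⟨(i : ℕ), by omega⟩ : Fin (m + k)) : ℕ) < m := i.isLt
  have := congrFun (congrFun hab ⟨(i : ℕ), by omega⟩) j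
  unfold seqOf at this
  rw [dif_pos hi, dif_pos hi] at this
  unfold Xlow at this
  have hii : (⟨((⟨(i : ℕ), by omega⟩ : Fin (m + k)) : ℕ), hi⟩ : Fin m) = i := by
    apply Fin.ext; simp
  rw [hii] at this
  rw [dif_pos he, dif_pos he] at this
  exact this

lemma pXor_eq {m k : ℕ} (S : Fin k → Finset (Fin m)) (x : Fin (m + k) → (Fin k → Bool)) :
    pXor S x = if ∃ b, seqOf S b = x then ((1 / 2 : ℝ)) ^ (Fintype.card (Edge S)) else 0 := by
  unfold pXor
  by_cases hx : ∃ b, seqOf S b = x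
  · obtain ⟨b0, hb0⟩ := hx
    rw [if_pos ⟨b0, hb0⟩]
    rw [Finset.sum_eq_single b0]
    · rw [if_pos hb0]
    · intro b _ hb
      rw [if_neg]
      intro hcon
      exact hb (seqOf_injective S (hcon.trans hb0.symm))
    · intro hb0'
      exact absurd (Finset.mem_univ b0) hb0'
  · rw [if_neg hx]
    apply Finset.sum_eq_zero
    intro b _
    rw [if_neg (fun hc => hx ⟨b, hc⟩)]


----------------------------------------------------------------
-- Part 2 : the constrained event sets and counting
----------------------------------------------------------------

lemma bool_xor3 (p q : Bool) : xor p (xor p q) = q := by cases p <;> cases q <;> decide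

/-- the constraint imposed by the kept (non-erased) visited coordinates -/
def Cnd {n : ℕ} {X : Type} (vis : Fin n → Prop) (h : Fin n → Option X) (x : Fin n → X) : Prop :=
  ∀ j, vis j → ∀ a, h j = some a → x j = a

def Eset {m k : ℕ} (S : Fin k → Finset (Fin m)) (vis : Fin (m + k) → Prop)
    (h : Fin (m + k) → Option (Fin k → Bool)) : Finset (Fin (m + k) → (Fin k → Bool)) :=
  Finset.univ.filter (fun x => (∃ b, seqOf S b = x) ∧ Cnd vis h x)

def Dset {m k : ℕ} (S : Fin k → Finset (Fin m)) (vis : Fin (m + k) → Prop)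
    (h : Fin (m + k) → Option (Fin k → Bool)) (u : ↥(sensXor m k) → (Fin k → Bool)) :
    Finset (Fin (m + k) → (Fin k → Bool)) :=
  (Eset S vis h).filter (fun x => restr (sensXor m k) x = u)

def Fset {m k : ℕ} (S : Fin k → Finset (Fin m)) (vis : Fin (m + k) → Prop)
    (h : Fin (m + k) → Option (Fin k → Bool)) (c : Fin (m + k)) (a : Fin k → Bool)
    (u : ↥(sensXor m k) → (Fin k → Bool)) : Finset (Fin (m + k) → (Fin k → Bool)) :=
  (Dset S vis h u).filter (fun x => x c = a)

variable {m k : ℕ} {S : Fin k → Finset (Fin m)} {vis : Fin (m + k) → Prop}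
  {h : Fin (m + k) → Option (Fin k → Bool)}

lemma Eset_xor3 {x1 x2 x3 : Fin (m + k) → (Fin k → Bool)}
    (h1 : x1 ∈ Eset S vis h) (h2 : x2 ∈ Eset S vis h) (h3 : x3 ∈ Eset S vis h) :
    xo x1 (xo x2 x3) ∈ Eset S vis h := by
  simp only [Eset, Finset.mem_filter, Finset.mem_univ, true_and] at *
  obtain ⟨⟨b1, hb1⟩, hc1⟩ := h1
  obtain ⟨⟨b2, hb2⟩, hc2⟩ := h2
  obtain ⟨⟨b3, hb3⟩, hc3⟩ := h3
  constructor
  · exact ⟨bxo b1 (bxo b2 b3), by rw [seqOf_xor, seqOf_xor, hb1, hb2, hb3]⟩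
  · intro j hj a ha
    funext jj
    have e1 := congrFun (hc1 j hj a ha) jj
    have e2 := congrFun (hc2 j hj a ha) jj
    have e3 := congrFun (hc3 j hj a ha) jj
    simp only [xo, e1, e2, e3]
    cases a jj <;> decide

lemma xo_invol (w x : Fin (m + k) → (Fin k → Bool)) : xo w (xo w x) = x := by
  funext i j; simp only [xo]; exact bool_xor3 _ _

/-- translation bijection -/
lemma card_eq_of_xor_maps {A B : Finset (Fin (m + k) → (Fin k → Bool))}
    (w : Fin (m + k) → (Fin k → Bool))
    (hAB : ∀ x ∈ A, xo w x ∈ B) (hBA : ∀ x ∈ B, xo w x ∈ A) : A.card = B.card := by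
  apply Finset.card_bij' (fun x _ => xo w x) (fun x _ => xo w x) hAB hBA
  · intro a _; exact xo_invol w a
  · intro a _; exact xo_invol w a

lemma mem_Dset {x : Fin (m + k) → (Fin k → Bool)} {u : ↥(sensXor m k) → (Fin k → Bool)} :
    x ∈ Dset S vis h u ↔ x ∈ Eset S vis h ∧ restr (sensXor m k) x = u :=
  Finset.mem_filter

lemma mem_Fset {x : Fin (m + k) → (Fin k → Bool)} {c : Fin (m + k)} {a : Fin k → Bool}
    {u : ↥(sensXor m k) → (Fin k → Bool)} :
    x ∈ Fset S vis h c a u ↔ x ∈ Eset S vis h ∧ restr (sensXor m k) x = u ∧ x c = a := by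
  simp [Fset, mem_Dset, Finset.mem_filter, and_assoc]

lemma restr_xo (x y : Fin (m + k) → (Fin k → Bool)) :
    restr (sensXor m k) (xo x y) = fun s => (fun j => xor (restr (sensXor m k) x s j) (restr (sensXor m k) y s j)) := rfl

lemma xo_mem_Fset {x1 x2 x3 : Fin (m + k) → (Fin k → Bool)} {c : Fin (m + k)}
    {a1 a2 a3 : Fin k → Bool} {u1 u2 u3 : ↥(sensXor m k) → (Fin k → Bool)}
    (h1 : x1 ∈ Fset S vis h c a1 u1) (h2 : x2 ∈ Fset S vis h c a2 u2)
    (h3 : x3 ∈ Fset S vis h c a3 u3) :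
    xo x1 (xo x2 x3) ∈ Fset S vis h c (fun j => xor (a1 j) (xor (a2 j) (a3 j)))
      (fun s j => xor (u1 s j) (xor (u2 s j) (u3 s j))) := by
  rw [mem_Fset] at *
  obtain ⟨he1, hu1, ha1⟩ := h1
  obtain ⟨he2, hu2, ha2⟩ := h2
  obtain ⟨he3, hu3, ha3⟩ := h3
  refine ⟨Eset_xor3 he1 he2 he3, ?_, ?_⟩
  · funext s j
    simp only [restr, xo] at *
    rw [show x1 (s : Fin (m+k)) = u1 s from congrFun hu1 s,
        show x2 (s : Fin (m+k)) = u2 s from congrFun hu2 s,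
        show x3 (s : Fin (m+k)) = u3 s from congrFun hu3 s]
  · funext j
    simp only [xo, ha1, ha2, ha3]

lemma xor3_self_eq {α : Sort _} (f : α → Bool) :
    (fun j => xor (f j) (xor (f j) (f j))) = f := by
  funext j; cases f j <;> decide

lemma Fcard_eq {x1 x2 : Fin (m + k) → (Fin k → Bool)} {c : Fin (m + k)}
    {a1 a2 : Fin k → Bool} {u1 u2 : ↥(sensXor m k) → (Fin k → Bool)}
    (h1 : x1 ∈ Fset S vis h c a1 u1) (h2 : x2 ∈ Fset S vis h c a2 u2) :
    (Fset S vis h c a1 u1).card = (Fset S vis h c a2 u2).card := by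
  apply card_eq_of_xor_maps (xo x1 x2)
  · intro x hx
    have := xo_mem_Fset h1 h2 hx
    rw [show xo x1 (xo x2 x) = xo (xo x1 x2) x from by funext i j; simp [xo, Bool.xor_assoc]] at this
    convert this using 2
    · funext j; rw [mem_Fset] at h2; cases (a2 j) <;> cases (a1 j) <;> simp
    · funext s j; cases (u2 s j) <;> cases (u1 s j) <;> simp
  · intro x hx
    have := xo_mem_Fset h2 h1 hx
    rw [show xo x2 (xo x1 x) = xo (xo x1 x2) x from by funext i j; simp [xo]; cases x1 i j <;> cases x2 i j <;> cases x i j <;> decide] at this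
    convert this using 2
    · funext j; cases (a1 j) <;> cases (a2 j) <;> simp
    · funext s j; cases (u1 s j) <;> cases (u2 s j) <;> simp

lemma Dset_eq_Fset_bUnion : True := trivial

lemma Dcard_eq {x1 x2 : Fin (m + k) → (Fin k → Bool)} {u1 u2 : ↥(sensXor m k) → (Fin k → Bool)}
    (h1 : x1 ∈ Dset S vis h u1) (h2 : x2 ∈ Dset S vis h u2) :
    (Dset S vis h u1).card = (Dset S vis h u2).card := by
  apply card_eq_of_xor_maps (xo x1 x2)
  · intro x hx
    rw [mem_Dset] at h1 h2 hx ⊢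
    constructor
    · rw [show xo (xo x1 x2) x = xo x1 (xo x2 x) from by funext i j; simp [xo, Bool.xor_assoc]]
      exact Eset_xor3 h1.1 h2.1 hx.1
    · funext s j
      simp only [restr, xo]
      rw [show x1 (s : Fin (m+k)) = u1 s from congrFun h1.2 s,
          show x2 (s : Fin (m+k)) = u2 s from congrFun h2.2 s,
          show x (s : Fin (m+k)) = u1 s from congrFun hx.2 s]
      cases u1 s j <;> cases u2 s j <;> decide
  · intro x hx
    rw [mem_Dset] at h1 h2 hx ⊢
    constructor
    · rw [show xo (xo x1 x2) x = xo x1 (xo x2 x) from by funext i j; simp [xo, Bool.xor_assoc]]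
      exact Eset_xor3 h1.1 h2.1 hx.1
    · funext s j
      simp only [restr, xo]
      rw [show x1 (s : Fin (m+k)) = u1 s from congrFun h1.2 s,
          show x2 (s : Fin (m+k)) = u2 s from congrFun h2.2 s,
          show x (s : Fin (m+k)) = u2 s from congrFun hx.2 s]
      cases u1 s j <;> cases u2 s j <;> decide

/-- transfer of the "always compatible" property between realized values -/
lemma transfer {c : Fin (m + k)} {a1 : Fin k → Bool}
    (hP : ∀ u, (Dset S vis h u).Nonempty → (Fset S vis h c a1 u).Nonempty)
    {x2 : Fin (m + k) → (Fin k → Bool)} (hx2 : x2 ∈ Eset S vis h) :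
    ∀ u, (Dset S vis h u).Nonempty → (Fset S vis h c (x2 c) u).Nonempty := by
  intro u hu
  obtain ⟨b'', hb''⟩ := hP (restr (sensXor m k) x2) ⟨x2, mem_Dset.mpr ⟨hx2, rfl⟩⟩
  obtain ⟨b', hb'⟩ := hP u hu
  have hx2F : x2 ∈ Fset S vis h c (x2 c) (restr (sensXor m k) x2) :=
    mem_Fset.mpr ⟨hx2, rfl, rfl⟩
  have key := xo_mem_Fset hx2F hb'' hb'
  refine ⟨xo x2 (xo b'' b'), ?_⟩
  convert key using 2
  · funext j; cases x2 c j <;> cases a1 j <;> decide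
  · funext s j; exact (bool_xor3 _ _).symm

----------------------------------------------------------------
-- Part 3 : general facts about prXH / prXHY
----------------------------------------------------------------

section General

variable {X : Type} [Fintype X] [DecidableEq X] {n : ℕ}
  {J : (Fin n → X) → (Fin n → Option X) → ℝ} {vis : Fin n → Prop}

lemma prXH_nonneg (hJ0 : ∀ x y, 0 ≤ J x y) (x : Fin n → X) (h : Fin n → Option X) :
    0 ≤ prXH J vis x h := by
  apply Finset.sum_nonneg
  intro y _
  split
  · exact hJ0 x y
  · exact le_rfl

lemma prXHY_nonneg (hJ0 : ∀ x y, 0 ≤ J x y) (x : Fin n → X) (h : Fin n → Option X)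
    (i : Fin n) (b : Option X) : 0 ≤ prXHY J vis x h i b := by
  apply Finset.sum_nonneg
  intro y _
  split
  · exact hJ0 x y
  · exact le_rfl

lemma prXHY_le_prXH (hJ0 : ∀ x y, 0 ≤ J x y) (x : Fin n → X) (h : Fin n → Option X)
    (i : Fin n) (b : Option X) : prXHY J vis x h i b ≤ prXH J vis x h := by
  apply Finset.sum_le_sum
  intro y _
  by_cases hy : agreeV vis y h
  · by_cases hyb : y i = b
    · rw [if_pos ⟨hyb, hy⟩, if_pos hy]
    · rw [if_neg (fun hc => hyb hc.1), if_pos hy]; exact hJ0 x y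
  · rw [if_neg (fun hc => hy hc.2), if_neg hy]

lemma prXHY_split (hJ0 : ∀ x y, 0 ≤ J x y)
    (hsupp : ∀ x y, 0 < J x y → ∀ i : Fin n, y i = some (x i) ∨ y i = none)
    (x : Fin n → X) (h : Fin n → Option X) (i : Fin n) :
    prXHY J vis x h i (some (x i)) + prXHY J vis x h i none = prXH J vis x h := by
  unfold prXHY prXH
  rw [← Finset.sum_add_distrib]
  apply Finset.sum_congr rfl
  intro y _
  by_cases hy : agreeV vis y h
  · rcases (hJ0 x y).lt_or_eq with hpos | hzero
    · rcases hsupp x y hpos i with hs | hs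
      · rw [if_pos ⟨hs, hy⟩, if_neg (fun hc => by rw [hs] at hc; exact Option.some_ne_none _ hc.1),
          add_zero, if_pos hy]
      · rw [if_neg (fun hc => by rw [hs] at hc; exact Option.some_ne_none _ hc.1.symm),
          if_pos ⟨hs, hy⟩, zero_add, if_pos hy]
    · rw [← hzero]
      simp
  · rw [if_neg (fun hc => hy hc.2), if_neg (fun hc => hy hc.2), if_neg hy, add_zero]

lemma prXHY_other (hJ0 : ∀ x y, 0 ≤ J x y)
    (hsupp : ∀ x y, 0 < J x y → ∀ i : Fin n, y i = some (x i) ∨ y i = none)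
    (x : Fin n → X) (h : Fin n → Option X) (i : Fin n) (b : Option X)
    (hb1 : b ≠ some (x i)) (hb2 : b ≠ none) : prXHY J vis x h i b = 0 := by
  apply Finset.sum_eq_zero
  intro y _
  split
  · next hc =>
    rcases (hJ0 x y).lt_or_eq with hpos | hzero
    · rcases hsupp x y hpos i with hs | hs
      · exact absurd (hc.1 ▸ hs ▸ rfl : b = some (x i)) hb1
      · exact absurd (hc.1 ▸ hs ▸ rfl : b = none) hb2
    · exact hzero.symm
  · rfl

lemma visOrd_succ (σ : Equiv.Perm (Fin n)) (t : ℕ) (ht : t < n) (j : Fin n) :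
    visOrd σ (t + 1) j ↔ visOrd σ t j ∨ j = σ ⟨t, ht⟩ := by
  unfold visOrd
  constructor
  · intro hj
    rcases Nat.lt_succ_iff_lt_or_eq.mp hj with hlt | heq
    · exact Or.inl hlt
    · right
      have : σ.symm j = ⟨t, ht⟩ := Fin.ext heq
      rw [← this, Equiv.apply_symm_apply]
  · rintro (hlt | rfl)
    · exact Nat.lt_succ_of_lt hlt
    · rw [Equiv.symm_apply_apply]
      exact Nat.lt_succ_self t

lemma agreeV_succ (σ : Equiv.Perm (Fin n)) (t : ℕ) (ht : t < n)
    (y h : Fin n → Option X) :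
    agreeV (visOrd σ (t + 1)) y h ↔
      y (σ ⟨t, ht⟩) = h (σ ⟨t, ht⟩) ∧ agreeV (visOrd σ t) y h := by
  unfold agreeV
  constructor
  · intro hy
    refine ⟨hy _ ((visOrd_succ σ t ht _).mpr (Or.inr rfl)), fun j hj => hy j ((visOrd_succ σ t ht _).mpr (Or.inl hj))⟩
  · rintro ⟨h1, h2⟩ j hj
    rcases (visOrd_succ σ t ht j).mp hj with hlt | rfl
    · exact h2 j hlt
    · exact h1

lemma prXH_succ (σ : Equiv.Perm (Fin n)) (t : ℕ) (ht : t < n)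
    (x : Fin n → X) (h : Fin n → Option X) :
    prXH J (visOrd σ (t + 1)) x h = prXHY J (visOrd σ t) x h (σ ⟨t, ht⟩) (h (σ ⟨t, ht⟩)) := by
  unfold prXH prXHY
  apply Finset.sum_congr rfl
  intro y _
  congr 1
  rw [eq_iff_iff]
  exact agreeV_succ σ t ht y h

lemma prKH_collapse (K : Finset (Fin n)) (u : ↥K → X) (h : Fin n → Option X) :
    prKH J K vis u h = ∑ x : Fin n → X, if restr K x = u then prXH J vis x h else 0 := by
  unfold prKH prXH
  apply Finset.sum_congr rfl
  intro x _
  by_cases hr : restr K x = u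
  · rw [if_pos hr]
    apply Finset.sum_congr rfl
    intro y _
    by_cases hy : agreeV vis y h
    · rw [if_pos ⟨hr, hy⟩, if_pos hy]
    · rw [if_neg (fun hc => hy hc.2), if_neg hy]
  · rw [if_neg hr]
    apply Finset.sum_eq_zero
    intro y _
    rw [if_neg (fun hc => hr hc.1)]

lemma prIKH_collapse (K : Finset (Fin n)) (c : Fin n) (a : X) (u : ↥K → X)
    (h : Fin n → Option X) :
    prIKH J K vis c a u h
      = ∑ x : Fin n → X, if x c = a ∧ restr K x = u then prXH J vis x h else 0 := by
  unfold prIKH prXH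
  apply Finset.sum_congr rfl
  intro x _
  by_cases hr : x c = a ∧ restr K x = u
  · rw [if_pos hr]
    apply Finset.sum_congr rfl
    intro y _
    by_cases hy : agreeV vis y h
    · rw [if_pos ⟨hr.1, hr.2, hy⟩, if_pos hy]
    · rw [if_neg (fun hc => hy hc.2.2), if_neg hy]
  · rw [if_neg hr]
    apply Finset.sum_eq_zero
    intro y _
    rw [if_neg (fun hc => hr ⟨hc.1, hc.2.1⟩)]

end General

----------------------------------------------------------------
-- Part 4 : minC / condX computations under the product form
----------------------------------------------------------------

section Bridge

variable {m k : ℕ} {S : Fin k → Finset (Fin m)} {vis : Fin (m + k) → Prop}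
  {h : Fin (m + k) → Option (Fin k → Bool)}
  {J : (Fin (m + k) → (Fin k → Bool)) → (Fin (m + k) → Option (Fin k → Bool)) → ℝ}

def qE {m k : ℕ} (S : Fin k → Finset (Fin m)) : ℝ := (1 / 2 : ℝ) ^ (Fintype.card (Edge S))

lemma qE_pos : 0 < qE S := by unfold qE; positivity

/-- the product form hypothesis for `(vis, h)` -/
def Hform {m k : ℕ} (S : Fin k → Finset (Fin m)) (vis : Fin (m + k) → Prop)
    (h : Fin (m + k) → Option (Fin k → Bool))
    (J : (Fin (m + k) → (Fin k → Bool)) → (Fin (m + k) → Option (Fin k → Bool)) → ℝ) : Prop :=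
  ∀ x, prXH J vis x h = pXor S x * (if Cnd vis h x then 1 else 0)

lemma prXH_indicator (hf : Hform S vis h J) (x : Fin (m + k) → (Fin k → Bool)) :
    prXH J vis x h = if x ∈ Eset S vis h then qE S else 0 := by
  rw [hf x, pXor_eq]
  by_cases h1 : ∃ b, seqOf S b = x <;> by_cases h2 : Cnd vis h x <;>
    simp [Eset, h1, h2, Finset.mem_filter, qE]

lemma pos_iff_mem_Eset (hf : Hform S vis h J) (x : Fin (m + k) → (Fin k → Bool)) :
    0 < prXH J vis x h ↔ x ∈ Eset S vis h := by
  rw [prXH_indicator hf]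
  by_cases hx : x ∈ Eset S vis h <;> simp [hx, qE_pos, lt_irrefl]

lemma prKH_count (hf : Hform S vis h J) (u : ↥(sensXor m k) → (Fin k → Bool)) :
    prKH J (sensXor m k) vis u h = ((Dset S vis h u).card : ℝ) * qE S := by
  rw [prKH_collapse]
  have : ∀ x : Fin (m + k) → (Fin k → Bool),
      (if restr (sensXor m k) x = u then prXH J vis x h else 0)
        = if x ∈ Dset S vis h u then qE S else 0 := by
    intro x
    rw [prXH_indicator hf]
    by_cases h1 : restr (sensXor m k) x = u <;> by_cases h2 : x ∈ Eset S vis h <;>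
      simp [mem_Dset, h1, h2]
  rw [Finset.sum_congr rfl (fun x _ => this x), Finset.sum_ite_mem, Finset.univ_inter,
    Finset.sum_const, nsmul_eq_mul]

lemma prIKH_count (hf : Hform S vis h J) (c : Fin (m + k)) (a : Fin k → Bool)
    (u : ↥(sensXor m k) → (Fin k → Bool)) :
    prIKH J (sensXor m k) vis c a u h = ((Fset S vis h c a u).card : ℝ) * qE S := by
  rw [prIKH_collapse]
  have : ∀ x : Fin (m + k) → (Fin k → Bool),
      (if x c = a ∧ restr (sensXor m k) x = u then prXH J vis x h else 0)
        = if x ∈ Fset S vis h c a u then qE S else 0 := by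
    intro x
    rw [prXH_indicator hf]
    by_cases h1 : x c = a <;> by_cases h1' : restr (sensXor m k) x = u <;>
      by_cases h2 : x ∈ Eset S vis h <;> simp [mem_Fset, h1, h1', h2]
  rw [Finset.sum_congr rfl (fun x _ => this x), Finset.sum_ite_mem, Finset.univ_inter,
    Finset.sum_const, nsmul_eq_mul]

lemma condX_count (hf : Hform S vis h J) (c : Fin (m + k)) (a : Fin k → Bool)
    (u : ↥(sensXor m k) → (Fin k → Bool)) :
    condX J (sensXor m k) vis c a u h
      = ((Fset S vis h c a u).card : ℝ) / ((Dset S vis h u).card : ℝ) := by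
  unfold condX
  rw [prKH_count hf, prIKH_count hf, mul_div_mul_right _ _ (ne_of_gt qE_pos)]

lemma prKH_pos_iff (hf : Hform S vis h J) (u : ↥(sensXor m k) → (Fin k → Bool)) :
    0 < prKH J (sensXor m k) vis u h ↔ (Dset S vis h u).Nonempty := by
  rw [prKH_count hf]
  constructor
  · intro hp
    rw [← Finset.card_pos]
    by_contra hc
    push_neg at hc
    have hc0 : (Dset S vis h u).card = 0 := Nat.le_zero.mp hc
    rw [hc0] at hp
    simp at hp
  · intro hp
    exact mul_pos (by exact_mod_cast Finset.card_pos.mpr hp) qE_pos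

lemma condX_pos_of_mem (hf : Hform S vis h J) {x : Fin (m + k) → (Fin k → Bool)}
    (hx : x ∈ Eset S vis h) (c : Fin (m + k)) :
    0 < condX J (sensXor m k) vis c (x c) (restr (sensXor m k) x) h := by
  rw [condX_count hf]
  have hxF : x ∈ Fset S vis h c (x c) (restr (sensXor m k) x) := mem_Fset.mpr ⟨hx, rfl, rfl⟩
  have hxD : x ∈ Dset S vis h (restr (sensXor m k) x) := mem_Dset.mpr ⟨hx, rfl⟩
  apply div_pos
  · exact_mod_cast Finset.card_pos.mpr ⟨x, hxF⟩
  · exact_mod_cast Finset.card_pos.mpr ⟨x, hxD⟩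

lemma minC_eq_condX (hf : Hform S vis h J) {x : Fin (m + k) → (Fin k → Bool)}
    (hx : x ∈ Eset S vis h) {c : Fin (m + k)}
    (hP : ∀ u, (Dset S vis h u).Nonempty → (Fset S vis h c (x c) u).Nonempty) :
    minC J (sensXor m k) vis c (x c) h
      = condX J (sensXor m k) vis c (x c) (restr (sensXor m k) x) h := by
  have hxF : x ∈ Fset S vis h c (x c) (restr (sensXor m k) x) := mem_Fset.mpr ⟨hx, rfl, rfl⟩
  have hxD : x ∈ Dset S vis h (restr (sensXor m k) x) := mem_Dset.mpr ⟨hx, rfl⟩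
  unfold minC
  have hset : {r : ℝ | ∃ u, 0 < prKH J (sensXor m k) vis u h
        ∧ r = condX J (sensXor m k) vis c (x c) u h}
      = {condX J (sensXor m k) vis c (x c) (restr (sensXor m k) x) h} := by
    ext r
    simp only [Set.mem_setOf_eq, Set.mem_singleton_iff]
    constructor
    · rintro ⟨u, hu, rfl⟩
      have hDu : (Dset S vis h u).Nonempty := (prKH_pos_iff hf u).mp hu
      obtain ⟨z, hz⟩ := hP u hDu
      have hzD : z ∈ Dset S vis h u := Finset.mem_of_mem_filter _ hz
      rw [condX_count hf, condX_count hf, Fcard_eq hz hxF, Dcard_eq hzD hxD]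
    · rintro rfl
      exact ⟨restr (sensXor m k) x, (prKH_pos_iff hf _).mpr ⟨x, hxD⟩, rfl⟩
  rw [hset, csInf_singleton]

lemma minC_eq_zero (hf : Hform S vis h J) {c : Fin (m + k)} {a : Fin k → Bool}
    (hnP : ¬ ∀ u, (Dset S vis h u).Nonempty → (Fset S vis h c a u).Nonempty) :
    minC J (sensXor m k) vis c a h = 0 := by
  push_neg at hnP
  obtain ⟨u0, hD0, hF0⟩ := hnP
  set M := {r : ℝ | ∃ u, 0 < prKH J (sensXor m k) vis u h
      ∧ r = condX J (sensXor m k) vis c a u h} with hM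
  have h0mem : (0 : ℝ) ∈ M := by
    refine ⟨u0, (prKH_pos_iff hf u0).mpr hD0, ?_⟩
    rw [condX_count hf, hF0]
    simp
  have hlb : ∀ r ∈ M, (0 : ℝ) ≤ r := by
    rintro r ⟨u, hu, rfl⟩
    rw [condX_count hf]
    positivity
  exact le_antisymm (csInf_le ⟨0, hlb⟩ h0mem) (le_csInf ⟨0, h0mem⟩ hlb)

end Bridge

----------------------------------------------------------------
-- Part 5 : the invariant and the main induction
----------------------------------------------------------------

section Inv

lemma prXHY_eq_zero_of {X : Type} [Fintype X] [DecidableEq X] {n : ℕ}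
    {J : (Fin n → X) → (Fin n → Option X) → ℝ} {vis : Fin n → Prop}
    (hJ0 : ∀ x y, 0 ≤ J x y) {x : Fin n → X} {h : Fin n → Option X}
    (hz : prXH J vis x h = 0) (i : Fin n) (b : Option X) : prXHY J vis x h i b = 0 :=
  le_antisymm ((prXHY_le_prXH hJ0 x h i b).trans hz.le) (prXHY_nonneg hJ0 x h i b)

lemma Cnd_succ {X : Type} {n : ℕ} (σ : Equiv.Perm (Fin n)) (t : ℕ) (ht : t < n)
    (h : Fin n → Option X) (x : Fin n → X) :
    Cnd (visOrd σ (t + 1)) h x ↔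
      Cnd (visOrd σ t) h x ∧ (∀ a, h (σ ⟨t, ht⟩) = some a → x (σ ⟨t, ht⟩) = a) := by
  unfold Cnd
  constructor
  · intro hcn
    exact ⟨fun j hj => hcn j ((visOrd_succ σ t ht j).mpr (Or.inl hj)),
      fun a ha => hcn _ ((visOrd_succ σ t ht _).mpr (Or.inr rfl)) a ha⟩
  · rintro ⟨h1, h2⟩ j hj a ha
    rcases (visOrd_succ σ t ht j).mp hj with hlt | rfl
    · exact h1 j hlt a ha
    · exact h2 a ha

lemma mem_Eset_iff {m k : ℕ} {S : Fin k → Finset (Fin m)} {vis : Fin (m + k) → Prop}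
    {h : Fin (m + k) → Option (Fin k → Bool)} {x : Fin (m + k) → (Fin k → Bool)} :
    x ∈ Eset S vis h ↔ (∃ b, seqOf S b = x) ∧ Cnd vis h x := by
  simp [Eset, Finset.mem_filter]

lemma pXor_zero_of_not_mem {m k : ℕ} {S : Fin k → Finset (Fin m)} {vis : Fin (m + k) → Prop}
    {h : Fin (m + k) → Option (Fin k → Bool)} {x : Fin (m + k) → (Fin k → Bool)}
    (hx : x ∉ Eset S vis h) (hcnd : Cnd vis h x) : pXor S x = 0 := by
  rw [pXor_eq, if_neg]
  intro hrange
  exact hx (mem_Eset_iff.mpr ⟨hrange, hcnd⟩)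

lemma invariant {m k : ℕ} (S : Fin k → Finset (Fin m)) (σ : Equiv.Perm (Fin (m + k)))
    (J : (Fin (m + k) → (Fin k → Bool)) → (Fin (m + k) → Option (Fin k → Bool)) → ℝ)
    (hJ : IsSequentialMechanismOrd (pXor S) (sensXor m k) σ J) :
    ∀ t : ℕ, t ≤ m + k → ∀ h : Fin (m + k) → Option (Fin k → Bool),
      Hform S (visOrd σ t) h J ∨ (∀ x, prXH J (visOrd σ t) x h = 0) := by
  obtain ⟨hJ0, hJm, hJs, hJme⟩ := hJ
  intro t
  induction t with
  | zero =>
    intro _ h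
    left
    intro x
    have hcnd : Cnd (visOrd σ 0) h x := fun j hj => absurd hj (Nat.not_lt_zero _)
    rw [if_pos hcnd, mul_one, ← hJm x]
    unfold prXH
    apply Finset.sum_congr rfl
    intro y _
    exact if_pos (fun j hj => absurd hj (Nat.not_lt_zero _))
  | succ t ih =>
    intro ht1 h
    have ht : t < m + k := ht1
    rcases ih (le_of_lt ht) h with hform | hzero
    · -- product form at time t
      by_cases hE : (Eset S (visOrd σ t) h).Nonempty
      · -- the event set is nonempty : dichotomy
        by_cases hA : ∃ x0 ∈ Eset S (visOrd σ t) h, ∀ u,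
            (Dset S (visOrd σ t) h u).Nonempty →
            (Fset S (visOrd σ t) h (σ ⟨t, ht⟩) (x0 (σ ⟨t, ht⟩)) u).Nonempty
        · -- CASE A : keep everywhere
          obtain ⟨x0, hx0, hP0⟩ := hA
          have hPall : ∀ x ∈ Eset S (visOrd σ t) h, ∀ u,
              (Dset S (visOrd σ t) h u).Nonempty →
              (Fset S (visOrd σ t) h (σ ⟨t, ht⟩) (x (σ ⟨t, ht⟩)) u).Nonempty :=
            fun x hx => transfer hP0 hx
          have hkeep : ∀ x ∈ Eset S (visOrd σ t) h,
              prXHY J (visOrd σ t) x h (σ ⟨t, ht⟩) (some (x (σ ⟨t, ht⟩)))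
                = prXH J (visOrd σ t) x h := by
            intro x hx
            have hpos := (pos_iff_mem_Eset hform x).mpr hx
            have hme := hJme ⟨t, ht⟩ x h hpos
            rw [minC_eq_condX hform hx (hPall x hx),
              div_self (ne_of_gt (condX_pos_of_mem hform hx (σ ⟨t, ht⟩))), one_mul] at hme
            exact hme
          have hnone : ∀ x ∈ Eset S (visOrd σ t) h,
              prXHY J (visOrd σ t) x h (σ ⟨t, ht⟩) none = 0 := by
            intro x hx
            have hsp := prXHY_split (vis := visOrd σ t) hJ0 hJs x h (σ ⟨t, ht⟩)
            rw [hkeep x hx] at hsp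
            linarith
          cases hhc : h (σ ⟨t, ht⟩) with
          | none =>
            right
            intro x
            rw [prXH_succ σ t ht x h, hhc]
            by_cases hx : x ∈ Eset S (visOrd σ t) h
            · exact hnone x hx
            · have hz : prXH J (visOrd σ t) x h = 0 := by
                rw [prXH_indicator hform, if_neg hx]
              exact prXHY_eq_zero_of hJ0 hz _ _
          | some a =>
            left
            intro x
            rw [prXH_succ σ t ht x h, hhc]
            by_cases hx : x ∈ Eset S (visOrd σ t) h
            · by_cases hax : a = x (σ ⟨t, ht⟩)
              · subst hax
                rw [hkeep x hx]
                have hcnd1 : Cnd (visOrd σ (t + 1)) h x :=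
                  (Cnd_succ σ t ht h x).mpr ⟨(mem_Eset_iff.mp hx).2,
                    fun a' ha' => by rw [hhc] at ha'; exact (Option.some_injective _ ha')⟩
                rw [if_pos hcnd1, mul_one, hform x, if_pos (mem_Eset_iff.mp hx).2, mul_one]
              · rw [prXHY_other hJ0 hJs x h _ (some a)
                  (fun hcon => hax (Option.some_injective _ hcon)) (Option.some_ne_none a)]
                have hcnd1 : ¬ Cnd (visOrd σ (t + 1)) h x := by
                  intro hcn
                  exact hax (((Cnd_succ σ t ht h x).mp hcn).2 a hhc).symm
                rw [if_neg hcnd1, mul_zero]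
            · have hz : prXH J (visOrd σ t) x h = 0 := by
                rw [prXH_indicator hform, if_neg hx]
              rw [prXHY_eq_zero_of hJ0 hz _ _]
              by_cases hcnd1 : Cnd (visOrd σ (t + 1)) h x
              · have hcnd0 : Cnd (visOrd σ t) h x := ((Cnd_succ σ t ht h x).mp hcnd1).1
                rw [if_pos hcnd1, mul_one, pXor_zero_of_not_mem hx hcnd0]
              · rw [if_neg hcnd1, mul_zero]
        · -- CASE B : erase everywhere
          have hPnone : ∀ x ∈ Eset S (visOrd σ t) h, ¬ ∀ u,
              (Dset S (visOrd σ t) h u).Nonempty →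
              (Fset S (visOrd σ t) h (σ ⟨t, ht⟩) (x (σ ⟨t, ht⟩)) u).Nonempty :=
            fun x hx hall => hA ⟨x, hx, hall⟩
          have herase : ∀ x ∈ Eset S (visOrd σ t) h,
              prXHY J (visOrd σ t) x h (σ ⟨t, ht⟩) (some (x (σ ⟨t, ht⟩))) = 0 := by
            intro x hx
            have hpos := (pos_iff_mem_Eset hform x).mpr hx
            have hme := hJme ⟨t, ht⟩ x h hpos
            rw [minC_eq_zero hform (hPnone x hx), zero_div, zero_mul] at hme
            exact hme
          have hnone : ∀ x ∈ Eset S (visOrd σ t) h,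
              prXHY J (visOrd σ t) x h (σ ⟨t, ht⟩) none = prXH J (visOrd σ t) x h := by
            intro x hx
            have hsp := prXHY_split (vis := visOrd σ t) hJ0 hJs x h (σ ⟨t, ht⟩)
            rw [herase x hx, zero_add] at hsp
            exact hsp
          cases hhc : h (σ ⟨t, ht⟩) with
          | none =>
            left
            intro x
            rw [prXH_succ σ t ht x h, hhc]
            have hcndiff : Cnd (visOrd σ (t + 1)) h x ↔ Cnd (visOrd σ t) h x := by
              rw [Cnd_succ σ t ht h x]
              exact ⟨fun hp => hp.1, fun hp => ⟨hp, fun a' ha' => by rw [hhc] at ha'; cases ha'⟩⟩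
            by_cases hx : x ∈ Eset S (visOrd σ t) h
            · rw [hnone x hx, hform x]
              by_cases hc0 : Cnd (visOrd σ t) h x
              · rw [if_pos hc0, if_pos (hcndiff.mpr hc0)]
              · rw [if_neg hc0, if_neg (fun hcc => hc0 (hcndiff.mp hcc))]
            · have hz : prXH J (visOrd σ t) x h = 0 := by
                rw [prXH_indicator hform, if_neg hx]
              rw [prXHY_eq_zero_of hJ0 hz _ _]
              by_cases hcnd1 : Cnd (visOrd σ (t + 1)) h x
              · rw [if_pos hcnd1, mul_one,
                  pXor_zero_of_not_mem hx (hcndiff.mp hcnd1)]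
              · rw [if_neg hcnd1, mul_zero]
          | some a =>
            right
            intro x
            rw [prXH_succ σ t ht x h, hhc]
            by_cases hx : x ∈ Eset S (visOrd σ t) h
            · by_cases hax : a = x (σ ⟨t, ht⟩)
              · subst hax
                exact herase x hx
              · exact prXHY_other hJ0 hJs x h _ (some a)
                  (fun hcon => hax (Option.some_injective _ hcon)) (Option.some_ne_none a)
            · have hz : prXH J (visOrd σ t) x h = 0 := by
                rw [prXH_indicator hform, if_neg hx]
              exact prXHY_eq_zero_of hJ0 hz _ _
      · -- event set empty : everything has probability zero
        right
        intro x
        rw [prXH_succ σ t ht x h]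
        have hz : prXH J (visOrd σ t) x h = 0 := by
          rw [prXH_indicator hform, if_neg (fun hx => hE ⟨x, hx⟩)]
        exact prXHY_eq_zero_of hJ0 hz _ _
    · -- zero at time t
      right
      intro x
      rw [prXH_succ σ t ht x h]
      exact prXHY_eq_zero_of hJ0 (hzero x) _ _

end Inv

/-- deterministic erasure in the XOR construction, Lemma 1: for the
distribution `p(x; U, 𝒮)` with sensitive set `K = {m+1, …, m+k}` and any processing
order `σ`, the sequential privacy mechanism has deterministic erasure decisions: at every
step `t`, the conditional probability of erasing position `σ t`, given the realization
`x` and the previously generated outputs, is either `0` or `1` (for every realization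
occurring with positive probability). -/
theorem xor_deterministic_erasure {m k : ℕ} (hm : 1 ≤ m) (hk : 1 ≤ k)
    (S : Fin k → Finset (Fin m))
    (hSne : ∀ j, (S j).Nonempty)
    (hScover : ∀ v : Fin m, ∃ j, v ∈ S j)
    (σ : Equiv.Perm (Fin (m + k)))
    (J : (Fin (m + k) → (Fin k → Bool)) → (Fin (m + k) → Option (Fin k → Bool)) → ℝ)
    (hJ : IsSequentialMechanismOrd (pXor S) (sensXor m k) σ J)
    (t : Fin (m + k)) (x : Fin (m + k) → (Fin k → Bool))
    (h : Fin (m + k) → Option (Fin k → Bool))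
    (hpos : 0 < prXH J (visOrd σ (t : ℕ)) x h) :
    prXHY J (visOrd σ (t : ℕ)) x h (σ t) none / prXH J (visOrd σ (t : ℕ)) x h = 0 ∨
    prXHY J (visOrd σ (t : ℕ)) x h (σ t) none / prXH J (visOrd σ (t : ℕ)) x h = 1 := by
  obtain ⟨hJ0, hJm, hJs, hJme⟩ := hJ
  rcases invariant S σ J ⟨hJ0, hJm, hJs, hJme⟩ (t : ℕ) (le_of_lt t.isLt) h with hform | hzero
  · have hx : x ∈ Eset S (visOrd σ (t : ℕ)) h := (pos_iff_mem_Eset hform x).mp hpos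
    have hme := hJme t x h hpos
    by_cases hP : ∀ u, (Dset S (visOrd σ (t : ℕ)) h u).Nonempty →
        (Fset S (visOrd σ (t : ℕ)) h (σ t) (x (σ t)) u).Nonempty
    · left
      rw [minC_eq_condX hform hx hP,
        div_self (ne_of_gt (condX_pos_of_mem hform hx (σ t))), one_mul] at hme
      have hsp := prXHY_split (vis := visOrd σ (t : ℕ)) hJ0 hJs x h (σ t)
      rw [hme] at hsp
      have h0 : prXHY J (visOrd σ (t : ℕ)) x h (σ t) none = 0 := by linarith
      rw [h0, zero_div]
    · right
      rw [minC_eq_zero hform hP, zero_div, zero_mul] at hme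
      have hsp := prXHY_split (vis := visOrd σ (t : ℕ)) hJ0 hJs x h (σ t)
      rw [hme, zero_add] at hsp
      rw [hsp, div_self (ne_of_gt hpos)]
  · rw [hzero x] at hpos
    exact absurd hpos (lt_irrefl 0)

end GenotypeHiding
end
end

section
/- Hidden-state transition identity under sensitive conditioning: for a hidden Markov model, for every 2 ≤ i ≤ n, every pair of states s, s' ∈ 𝒮, and every u ∈ 𝒳^{|K|} with P(S_{i−1} = s, X_K = u) > 0, one has P(S_i = s' | S_{i−1} = s, X_K = u) = π(s, s') · γ^{(i)}(u, s') / ∑_{t∈𝒮} π(s, t) · γ^{(i)}(u, t), where γ^{(i)}(u, t) := P(X_{K_{i+}} = u_+ | S_i = t). -/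
open Finset
open scoped Classical

set_option linter.unusedSectionVars false
set_option linter.unusedVariables false
set_option maxHeartbeats 1000000

noncomputable section

namespace GenotypeHiding

variable {S X : Type} [Fintype S] [DecidableEq S] [Fintype X] [DecidableEq X]

/-- The joint law of the hidden states `(S_1, …, S_n)` and the emissions `(X_1, …, X_n)`
of a hidden Markov model with initial distribution `μ`, transition probabilities `π` and
emission probabilities `q`:
`P(s, x) = μ(s_1) ∏_i π(s_i, s_{i+1}) ∏_i q(x_i | s_i)`. -/
def hmmJoint {n : ℕ} (hn : 0 < n) (μ : S → ℝ) (π : S → S → ℝ) (q : S → X → ℝ)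
    (s : Fin n → S) (x : Fin n → X) : ℝ :=
  μ (s ⟨0, hn⟩)
    * (∏ i : Fin n, if h : (i : ℕ) + 1 < n then π (s i) (s ⟨(i : ℕ) + 1, h⟩) else 1)
    * ∏ i : Fin n, q (s i) (x i)

/-- `P(S_i = t)` in the hidden Markov model. -/
def hmmPrS {n : ℕ} (hn : 0 < n) (μ : S → ℝ) (π : S → S → ℝ) (q : S → X → ℝ)
    (i : Fin n) (t : S) : ℝ :=
  ∑ s : Fin n → S, ∑ x : Fin n → X,
    if s i = t then hmmJoint hn μ π q s x else 0

/-- `P(X_{K_{i+}} = u_+, S_i = t)` in the hidden Markov model, where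
`K_{i+} = K ∩ {i, …, n}` and `u_+` is the corresponding subvector of `u`. -/
def hmmPrKplusS {n : ℕ} (hn : 0 < n) (μ : S → ℝ) (π : S → S → ℝ) (q : S → X → ℝ)
    (K : Finset (Fin n)) (i : Fin n) (u : Fin n → X) (t : S) : ℝ :=
  ∑ s : Fin n → S, ∑ x : Fin n → X,
    if (∀ j ∈ K, (i : ℕ) ≤ (j : ℕ) → x j = u j) ∧ s i = t then
      hmmJoint hn μ π q s x else 0

/-- `γ^{(i)}(u, t) = P(X_{K_{i+}} = u_+ | S_i = t)`. -/
def hmmGamma {n : ℕ} (hn : 0 < n) (μ : S → ℝ) (π : S → S → ℝ) (q : S → X → ℝ)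
    (K : Finset (Fin n)) (i : Fin n) (u : Fin n → X) (t : S) : ℝ :=
  hmmPrKplusS hn μ π q K i u t / hmmPrS hn μ π q i t

/-- `P(S_{i-1} = s₀, X_K = u)` in the hidden Markov model. -/
def hmmPrSK {n : ℕ} (hn : 0 < n) (μ : S → ℝ) (π : S → S → ℝ) (q : S → X → ℝ)
    (K : Finset (Fin n)) (i : Fin n) (s₀ : S) (u : Fin n → X) : ℝ :=
  ∑ s : Fin n → S, ∑ x : Fin n → X,
    if s i = s₀ ∧ (∀ j ∈ K, x j = u j) then hmmJoint hn μ π q s x else 0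

/-- `P(S_i = s₁, S_{i-1} = s₀, X_K = u)` in the hidden Markov model. -/
def hmmPrSSK {n : ℕ} (hn : 0 < n) (μ : S → ℝ) (π : S → S → ℝ) (q : S → X → ℝ)
    (K : Finset (Fin n)) (i i' : Fin n) (s₀ s₁ : S) (u : Fin n → X) : ℝ :=
  ∑ s : Fin n → S, ∑ x : Fin n → X,
    if s i = s₀ ∧ s i' = s₁ ∧ (∀ j ∈ K, x j = u j) then hmmJoint hn μ π q s x else 0



section auxGeneric
variable {ι β : Type} [Fintype ι] [DecidableEq ι] [Fintype β] [DecidableEq β]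


def glue (k : ι) (b : β) (r : {j : ι // j ≠ k} → β) : ι → β :=
  (Equiv.funSplitAt k β).symm (b, r)

lemma glue_self (k : ι) (b : β) (r) : glue k b r k = b := by
  simp [glue]

lemma glue_ne (k : ι) (b : β) (r) (j : ι) (h : j ≠ k) : glue k b r j = r ⟨j, h⟩ := by
  simp [glue, h]

lemma update_glue (k : ι) (b b' : β) (r) :
    Function.update (glue k b r) k b' = glue k b' r := by
  funext j
  by_cases h : j = k
  · subst h; simp [glue]
  · simp [Function.update_of_ne h, glue_ne _ _ _ _ h]

lemma sum_split (k : ι) (F : (ι → β) → ℝ) :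
    ∑ g : ι → β, F g = ∑ b : β, ∑ r : {j : ι // j ≠ k} → β, F (glue k b r) := by
  rw [← Equiv.sum_comp (Equiv.funSplitAt k β).symm F, Fintype.sum_prod_type]
  rfl

lemma glue_indep (k : ι) (A : (ι → β) → ℝ)
    (hA : ∀ g b, A (Function.update g k b) = A g) (b b' : β) (r) :
    A (glue k b r) = A (glue k b' r) := by
  rw [← update_glue k b' b r, hA]

lemma nonempty_of_sum_one (w : β → ℝ) (hw : ∑ b, w b = 1) : Nonempty β := by
  by_contra h
  rw [not_nonempty_iff] at h
  rw [Finset.univ_eq_empty, Finset.sum_empty] at hw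
  exact one_ne_zero hw.symm

lemma elim_one (k : ι) (A : (ι → β) → ℝ)
    (hA : ∀ g b, A (Function.update g k b) = A g) (w : β → ℝ) (hw : ∑ b, w b = 1) :
    ∑ g : ι → β, A g * w (g k) = (Fintype.card β : ℝ)⁻¹ * ∑ g, A g := by
  have hne : Nonempty β := nonempty_of_sum_one w hw
  have hc : (Fintype.card β : ℝ) ≠ 0 := by
    exact_mod_cast Fintype.card_ne_zero
  obtain ⟨b₀⟩ := hne
  rw [sum_split k (fun g => A g * w (g k)), sum_split k A]
  have h1 : ∀ b r, A (glue k b r) * w (glue k b r k) = w b * A (glue k b₀ r) := by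
    intro b r
    rw [glue_self, glue_indep k A hA b b₀ r, mul_comm]
  simp only [h1]
  have h2 : ∀ (b : β), ∑ r : {j : ι // j ≠ k} → β, A (glue k b r)
      = ∑ r : {j : ι // j ≠ k} → β, A (glue k b₀ r) := by
    intro b; exact Finset.sum_congr rfl fun r _ => glue_indep k A hA b b₀ r
  rw [Finset.sum_congr rfl (fun b _ => h2 b)]
  rw [← Finset.sum_mul_sum, hw, one_mul, Finset.sum_const, Finset.card_univ,
    nsmul_eq_mul, ← mul_assoc, inv_mul_cancel₀ hc, one_mul]

lemma elim_two (k j0 : ι) (hjk : j0 ≠ k) (A : (ι → β) → ℝ)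
    (hA : ∀ g b, A (Function.update g k b) = A g) (w : β → β → ℝ)
    (hw : ∀ a, ∑ b, w a b = 1) [Nonempty β] :
    ∑ g : ι → β, A g * w (g j0) (g k) = (Fintype.card β : ℝ)⁻¹ * ∑ g, A g := by
  obtain ⟨b₀⟩ := (inferInstance : Nonempty β)
  have hc : (Fintype.card β : ℝ) ≠ 0 := by exact_mod_cast Fintype.card_ne_zero
  rw [sum_split k (fun g => A g * w (g j0) (g k)), sum_split k A]
  have h1 : ∀ b r, A (glue k b r) * w (glue k b r j0) (glue k b r k)
      = A (glue k b₀ r) * w (r ⟨j0, hjk⟩) b := by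
    intro b r
    rw [glue_self, glue_indep k A hA b b₀ r, glue_ne k b r j0 hjk]
  simp only [h1]
  rw [Finset.sum_comm]
  have h2 : ∀ r : {j : ι // j ≠ k} → β, ∑ b, A (glue k b₀ r) * w (r ⟨j0, hjk⟩) b
      = A (glue k b₀ r) := by
    intro r; rw [← Finset.mul_sum, hw, mul_one]
  rw [Finset.sum_congr rfl (fun r _ => h2 r)]
  have h3 : ∀ (b : β), ∑ r : {j : ι // j ≠ k} → β, A (glue k b r)
      = ∑ r : {j : ι // j ≠ k} → β, A (glue k b₀ r) := by
    intro b; exact Finset.sum_congr rfl fun r _ => glue_indep k A hA b b₀ r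
  rw [Finset.sum_congr rfl (fun b _ => h3 b), Finset.sum_const,
    Finset.card_univ, nsmul_eq_mul, ← mul_assoc, inv_mul_cancel₀ hc, one_mul]

lemma pin_indep (k : ι) (A : (ι → β) → ℝ)
    (hA : ∀ g b, A (Function.update g k b) = A g) (t t' : β) :
    ∑ g : ι → β, (if g k = t then A g else 0)
      = ∑ g : ι → β, (if g k = t' then A g else 0) := by
  rw [sum_split k (fun g => if g k = t then A g else 0),
      sum_split k (fun g => if g k = t' then A g else 0)]
  have key : ∀ (c : β), ∑ b : β, ∑ r : {j : ι // j ≠ k} → β,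
      (if glue k b r k = c then A (glue k b r) else 0)
      = ∑ r : {j : ι // j ≠ k} → β, A (glue k c r) := by
    intro c
    rw [Finset.sum_comm]
    have : ∀ r : {j : ι // j ≠ k} → β, (∑ b, if glue k b r k = c then A (glue k b r) else 0)
        = A (glue k c r) := by
      intro r
      have : ∀ b, (if glue k b r k = c then A (glue k b r) else 0)
          = (if b = c then A (glue k c r) else 0) := by
        intro b
        rw [glue_self]
        by_cases h : b = c
        · subst h; simp
        · simp [h]
      simp only [this]
      simp
    exact Finset.sum_congr rfl fun r _ => this r
  rw [key t, key t']
  exact Finset.sum_congr rfl fun r _ => glue_indep k A hA t t' r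

end auxGeneric

/-- merge: take `a` below `m`, `b` from `m` on. -/
def mgv {n : ℕ} {α : Type} (m : ℕ) (a b : Fin n → α) : Fin n → α :=
  fun j => if (j : ℕ) < m then a j else b j

lemma mgv_lt {n : ℕ} {α : Type} (m : ℕ) (a b : Fin n → α) (j : Fin n)
    (h : (j : ℕ) < m) : mgv m a b j = a j := if_pos h

lemma mgv_ge {n : ℕ} {α : Type} (m : ℕ) (a b : Fin n → α) (j : Fin n)
    (h : ¬ (j : ℕ) < m) : mgv m a b j = b j := if_neg h

lemma mgv_invol {n : ℕ} {α : Type} (m : ℕ) (a b : Fin n → α) :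
    mgv m (mgv m a b) (mgv m b a) = a := by
  funext j
  by_cases h : (j : ℕ) < m
  · rw [mgv_lt _ _ _ _ h, mgv_lt _ _ _ _ h]
  · rw [mgv_ge _ _ _ _ h, mgv_ge _ _ _ _ h]

lemma joint_mul_swap {n : ℕ} (hn : 0 < n) (μ : S → ℝ) (π : S → S → ℝ) (q : S → X → ℝ)
    (m : ℕ) (hm : 0 < m) (s s' : Fin n → S) (x x' : Fin n → X)
    (hss : ∀ j : Fin n, (j : ℕ) = m → s j = s' j) :
    hmmJoint hn μ π q s x * hmmJoint hn μ π q s' x'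
      = hmmJoint hn μ π q (mgv m s s') (mgv m x x')
        * hmmJoint hn μ π q (mgv m s' s) (mgv m x' x) := by
  have hμa : mgv m s s' ⟨0, hn⟩ = s ⟨0, hn⟩ := mgv_lt _ _ _ _ hm
  have hμb : mgv m s' s ⟨0, hn⟩ = s' ⟨0, hn⟩ := mgv_lt _ _ _ _ hm
  have hT : (∏ j : Fin n, if h : (j : ℕ) + 1 < n then
        π (mgv m s s' j) (mgv m s s' ⟨(j : ℕ) + 1, h⟩) else 1)
      * (∏ j : Fin n, if h : (j : ℕ) + 1 < n then
        π (mgv m s' s j) (mgv m s' s ⟨(j : ℕ) + 1, h⟩) else 1)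
      = (∏ j : Fin n, if h : (j : ℕ) + 1 < n then π (s j) (s ⟨(j : ℕ) + 1, h⟩) else 1)
      * (∏ j : Fin n, if h : (j : ℕ) + 1 < n then π (s' j) (s' ⟨(j : ℕ) + 1, h⟩) else 1) := by
    rw [← Finset.prod_mul_distrib, ← Finset.prod_mul_distrib]
    refine Finset.prod_congr rfl fun j _ => ?_
    by_cases h1 : (j : ℕ) + 1 < n
    · rw [dif_pos h1, dif_pos h1, dif_pos h1, dif_pos h1]
      by_cases h2 : (j : ℕ) < m
      · rw [mgv_lt _ _ _ _ h2, mgv_lt _ _ _ _ h2]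
        by_cases h3 : ((⟨(j : ℕ) + 1, h1⟩ : Fin n) : ℕ) < m
        · rw [mgv_lt _ _ _ _ h3, mgv_lt _ _ _ _ h3]
        · rw [mgv_ge _ _ _ _ h3, mgv_ge _ _ _ _ h3]
          have heq : s ⟨(j : ℕ) + 1, h1⟩ = s' ⟨(j : ℕ) + 1, h1⟩ := by
            apply hss
            simp only [Fin.val_mk] at h3 ⊢
            omega
          rw [heq]
      · have h3 : ¬ ((⟨(j : ℕ) + 1, h1⟩ : Fin n) : ℕ) < m := by
          simp only [Fin.val_mk] at h2 ⊢; omega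
        rw [mgv_ge _ _ _ _ h2, mgv_ge _ _ _ _ h2, mgv_ge _ _ _ _ h3, mgv_ge _ _ _ _ h3]
        ring
    · rw [dif_neg h1, dif_neg h1, dif_neg h1, dif_neg h1]
  have hQ : (∏ j : Fin n, q (mgv m s s' j) (mgv m x x' j))
      * (∏ j : Fin n, q (mgv m s' s j) (mgv m x' x j))
      = (∏ j : Fin n, q (s j) (x j)) * (∏ j : Fin n, q (s' j) (x' j)) := by
    rw [← Finset.prod_mul_distrib, ← Finset.prod_mul_distrib]
    refine Finset.prod_congr rfl fun j _ => ?_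
    by_cases h2 : (j : ℕ) < m
    · rw [mgv_lt _ _ _ _ h2, mgv_lt _ _ _ _ h2, mgv_lt _ _ _ _ h2, mgv_lt _ _ _ _ h2]
    · rw [mgv_ge _ _ _ _ h2, mgv_ge _ _ _ _ h2, mgv_ge _ _ _ _ h2, mgv_ge _ _ _ _ h2]
      ring
  simp only [hmmJoint]
  rw [hμa, hμb]
  calc μ (s ⟨0, hn⟩) * (∏ j : Fin n, if h : (j : ℕ) + 1 < n then π (s j) (s ⟨(j : ℕ) + 1, h⟩) else 1)
        * (∏ j : Fin n, q (s j) (x j))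
        * (μ (s' ⟨0, hn⟩) * (∏ j : Fin n, if h : (j : ℕ) + 1 < n then π (s' j) (s' ⟨(j : ℕ) + 1, h⟩) else 1)
        * (∏ j : Fin n, q (s' j) (x' j)))
      = μ (s ⟨0, hn⟩) * μ (s' ⟨0, hn⟩)
        * ((∏ j : Fin n, if h : (j : ℕ) + 1 < n then π (s j) (s ⟨(j : ℕ) + 1, h⟩) else 1)
          * (∏ j : Fin n, if h : (j : ℕ) + 1 < n then π (s' j) (s' ⟨(j : ℕ) + 1, h⟩) else 1))
        * ((∏ j : Fin n, q (s j) (x j)) * (∏ j : Fin n, q (s' j) (x' j))) := by ring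
    _ = μ (s ⟨0, hn⟩) * μ (s' ⟨0, hn⟩)
        * ((∏ j : Fin n, if h : (j : ℕ) + 1 < n then
            π (mgv m s s' j) (mgv m s s' ⟨(j : ℕ) + 1, h⟩) else 1)
          * (∏ j : Fin n, if h : (j : ℕ) + 1 < n then
            π (mgv m s' s j) (mgv m s' s ⟨(j : ℕ) + 1, h⟩) else 1))
        * ((∏ j : Fin n, q (mgv m s s' j) (mgv m x x' j))
          * (∏ j : Fin n, q (mgv m s' s j) (mgv m x' x j))) := by rw [hT, hQ]
    _ = _ := by ring


/-- `P(S_{i'} = s₀, S_i = t, X_{K ∩ [0,i)} = u)` -/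
def hmmD {n : ℕ} (hn : 0 < n) (μ : S → ℝ) (π : S → S → ℝ) (q : S → X → ℝ)
    (K : Finset (Fin n)) (i' i : Fin n) (s₀ : S) (u : Fin n → X) (t : S) : ℝ :=
  ∑ s : Fin n → S, ∑ x : Fin n → X,
    if s i' = s₀ ∧ s i = t ∧ (∀ j ∈ K, (j : ℕ) < (i : ℕ) → x j = u j) then
      hmmJoint hn μ π q s x else 0

lemma prSSK_mul_prS {n : ℕ} (hn : 0 < n) (μ : S → ℝ) (π : S → S → ℝ) (q : S → X → ℝ)
    (K : Finset (Fin n)) (i' i : Fin n) (hii' : (i' : ℕ) < (i : ℕ)) (s₀ t : S)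
    (u : Fin n → X) :
    hmmPrSSK hn μ π q K i' i s₀ t u * hmmPrS hn μ π q i t
      = hmmD hn μ π q K i' i s₀ u t * hmmPrKplusS hn μ π q K i u t := by
  classical
  have pair : ∀ {α β : Type} [Fintype α] [Fintype β] (f : α → β → ℝ),
      (∑ a : α, ∑ b : β, f a b) = ∑ p : α × β, f p.1 p.2 := by
    intro α β _ _ f
    exact (Fintype.sum_prod_type (f := fun p : α × β => f p.1 p.2)).symm
  unfold hmmPrSSK hmmPrS hmmD hmmPrKplusS
  rw [pair, pair, pair, pair, Fintype.sum_mul_sum, Fintype.sum_mul_sum, pair, pair]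
  set P := (Fin n → S) × (Fin n → X)
  let φ : P × P → P × P := fun p =>
    ((mgv (i : ℕ) p.1.1 p.2.1, mgv (i : ℕ) p.1.2 p.2.2),
     (mgv (i : ℕ) p.2.1 p.1.1, mgv (i : ℕ) p.2.2 p.1.2))
  have hφ : Function.Involutive φ := by
    rintro ⟨⟨a, b⟩, ⟨c, d⟩⟩
    simp only [φ, mgv_invol]
  refine Fintype.sum_equiv (Function.Involutive.toPerm φ hφ) _ _ fun pp => ?_
  obtain ⟨⟨s, x⟩, ⟨s', x'⟩⟩ := pp
  show (if s i' = s₀ ∧ s i = t ∧ (∀ j ∈ K, x j = u j) then hmmJoint hn μ π q s x else 0)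
      * (if s' i = t then hmmJoint hn μ π q s' x' else 0)
    = (if mgv (i : ℕ) s s' i' = s₀ ∧ mgv (i : ℕ) s s' i = t ∧
          (∀ j ∈ K, (j : ℕ) < (i : ℕ) → mgv (i : ℕ) x x' j = u j) then
        hmmJoint hn μ π q (mgv (i : ℕ) s s') (mgv (i : ℕ) x x') else 0)
      * (if (∀ j ∈ K, (i : ℕ) ≤ (j : ℕ) → mgv (i : ℕ) x' x j = u j) ∧ mgv (i : ℕ) s' s i = t then
        hmmJoint hn μ π q (mgv (i : ℕ) s' s) (mgv (i : ℕ) x' x) else 0)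
  rw [ite_zero_mul_ite_zero, ite_zero_mul_ite_zero]
  have hni : ¬ ((i : Fin n) : ℕ) < (i : ℕ) := lt_irrefl _
  have hiff : ((s i' = s₀ ∧ s i = t ∧ (∀ j ∈ K, x j = u j)) ∧ s' i = t)
      ↔ ((mgv (i : ℕ) s s' i' = s₀ ∧ mgv (i : ℕ) s s' i = t ∧
          (∀ j ∈ K, (j : ℕ) < (i : ℕ) → mgv (i : ℕ) x x' j = u j))
        ∧ (∀ j ∈ K, (i : ℕ) ≤ (j : ℕ) → mgv (i : ℕ) x' x j = u j) ∧ mgv (i : ℕ) s' s i = t) := by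
    constructor
    · rintro ⟨⟨h1, h2, h3⟩, h4⟩
      refine ⟨⟨?_, ?_, ?_⟩, ?_, ?_⟩
      · rw [mgv_lt _ _ _ _ hii']; exact h1
      · rw [mgv_ge _ _ _ _ hni]; exact h4
      · intro j hj hji; rw [mgv_lt _ _ _ _ hji]; exact h3 j hj
      · intro j hj hji; rw [mgv_ge _ _ _ _ (not_lt.mpr hji)]; exact h3 j hj
      · rw [mgv_ge _ _ _ _ hni]; exact h2
    · rintro ⟨⟨h1, h2, h3⟩, h4, h5⟩
      rw [mgv_lt _ _ _ _ hii'] at h1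
      rw [mgv_ge _ _ _ _ hni] at h2 h5
      refine ⟨⟨h1, h5, ?_⟩, h2⟩
      intro j hj
      by_cases hji : (j : ℕ) < (i : ℕ)
      · have := h3 j hj hji; rwa [mgv_lt _ _ _ _ hji] at this
      · have := h4 j hj (not_lt.mp hji); rwa [mgv_ge _ _ _ _ hji] at this
  by_cases h : (s i' = s₀ ∧ s i = t ∧ (∀ j ∈ K, x j = u j)) ∧ s' i = t
  · rw [if_pos h, if_pos (hiff.mp h)]
    refine joint_mul_swap hn μ π q (i : ℕ) (by omega) s s' x x' fun j hj => ?_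
    have hj' : j = i := Fin.ext hj
    subst hj'
    rw [h.1.2.1, h.2]
  · rw [if_neg h, if_neg fun hd => h (hiff.mpr hd)]


/-- truncated transition product -/
def Tt {S : Type} (π : S → S → ℝ) {n : ℕ} (m : ℕ) (s : Fin n → S) : ℝ :=
  ∏ j : Fin n, if h : (j : ℕ) + 1 < n ∧ (j : ℕ) + 1 < m then
    π (s j) (s ⟨(j : ℕ) + 1, h.1⟩) else 1

/-- truncated emission product -/
def Qt {S X : Type} (q : S → X → ℝ) {n : ℕ} (m : ℕ) (s : Fin n → S) (x : Fin n → X) : ℝ :=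
  ∏ j : Fin n, if (j : ℕ) < m then q (s j) (x j) else 1

lemma joint_eq_tq {n : ℕ} (hn : 0 < n) (μ : S → ℝ) (π : S → S → ℝ) (q : S → X → ℝ)
    (s : Fin n → S) (x : Fin n → X) :
    hmmJoint hn μ π q s x = μ (s ⟨0, hn⟩) * Tt π n s * Qt q n s x := by
  simp only [hmmJoint, Tt, Qt]
  congr 1
  · congr 1
    refine Finset.prod_congr rfl fun j _ => ?_
    by_cases h : (j : ℕ) + 1 < n
    · rw [dif_pos h, dif_pos ⟨h, h⟩]
    · rw [dif_neg h, dif_neg (by tauto)]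
  · refine Finset.prod_congr rfl fun j _ => ?_
    rw [if_pos j.isLt]

lemma Tt_succ {n : ℕ} (π : S → S → ℝ) (m : ℕ) (hm1 : 0 < m) (hm2 : m < n) (s : Fin n → S) :
    Tt π (m + 1) s = Tt π m s * π (s ⟨m - 1, by omega⟩) (s ⟨m, hm2⟩) := by
  have key : ∀ j : Fin n,
      (if h : (j : ℕ) + 1 < n ∧ (j : ℕ) + 1 < m + 1 then π (s j) (s ⟨(j : ℕ) + 1, h.1⟩) else 1)
      = (if h : (j : ℕ) + 1 < n ∧ (j : ℕ) + 1 < m then π (s j) (s ⟨(j : ℕ) + 1, h.1⟩) else 1)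
        * (if j = (⟨m - 1, by omega⟩ : Fin n) then π (s ⟨m - 1, by omega⟩) (s ⟨m, hm2⟩) else 1) := by
    intro j
    by_cases hj : j = (⟨m - 1, by omega⟩ : Fin n)
    · subst hj
      rw [if_pos rfl, dif_pos ⟨by simp; omega, by simp; omega⟩, dif_neg (by simp; omega), one_mul]
      have he : (⟨((⟨m - 1, by omega⟩ : Fin n) : ℕ) + 1, by simp; omega⟩ : Fin n) = ⟨m, hm2⟩ := by
        apply Fin.ext; simp; omega
      rw [he]
    · have hne : (j : ℕ) + 1 ≠ m := by
        intro hh; apply hj; apply Fin.ext; simp; omega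
      rw [if_neg hj, mul_one]
      by_cases h1 : (j : ℕ) + 1 < n ∧ (j : ℕ) + 1 < m
      · rw [dif_pos ⟨h1.1, by omega⟩, dif_pos h1]
      · rw [dif_neg (fun hc => h1 ⟨hc.1, by omega⟩), dif_neg h1]
  simp only [Tt]
  rw [Finset.prod_congr rfl fun j _ => key j, Finset.prod_mul_distrib,
    Finset.prod_ite_eq' Finset.univ (⟨m - 1, by omega⟩ : Fin n)
      (fun _ => π (s ⟨m - 1, by omega⟩) (s ⟨m, hm2⟩)), if_pos (Finset.mem_univ _)]

lemma Qt_succ {n : ℕ} (q : S → X → ℝ) (m : ℕ) (hm2 : m < n) (s : Fin n → S) (x : Fin n → X) :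
    Qt q (m + 1) s x = Qt q m s x * q (s ⟨m, hm2⟩) (x ⟨m, hm2⟩) := by
  have key : ∀ j : Fin n,
      (if (j : ℕ) < m + 1 then q (s j) (x j) else 1)
      = (if (j : ℕ) < m then q (s j) (x j) else 1)
        * (if j = (⟨m, hm2⟩ : Fin n) then q (s ⟨m, hm2⟩) (x ⟨m, hm2⟩) else 1) := by
    intro j
    by_cases hj : j = (⟨m, hm2⟩ : Fin n)
    · subst hj
      rw [if_pos rfl, if_pos (by simp), if_neg (by simp), one_mul]
    · have hne : (j : ℕ) ≠ m := by
        intro hh; apply hj; apply Fin.ext; simpa using hh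
      rw [if_neg hj, mul_one]
      by_cases h1 : (j : ℕ) < m
      · rw [if_pos (by omega), if_pos h1]
      · rw [if_neg (by omega), if_neg h1]
  simp only [Qt]
  rw [Finset.prod_congr rfl fun j _ => key j, Finset.prod_mul_distrib,
    Finset.prod_ite_eq' Finset.univ (⟨m, hm2⟩ : Fin n)
      (fun _ => q (s ⟨m, hm2⟩) (x ⟨m, hm2⟩)), if_pos (Finset.mem_univ _)]

lemma Tt_update {n : ℕ} (π : S → S → ℝ) (m : ℕ) (k : Fin n) (hk : m ≤ (k : ℕ))
    (s : Fin n → S) (a : S) : Tt π m (Function.update s k a) = Tt π m s := by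
  simp only [Tt]
  refine Finset.prod_congr rfl fun j _ => ?_
  by_cases h : (j : ℕ) + 1 < n ∧ (j : ℕ) + 1 < m
  · have hj : j ≠ k := by
      intro e; have := congrArg Fin.val e; omega
    have hj1 : (⟨(j : ℕ) + 1, h.1⟩ : Fin n) ≠ k := by
      intro e; have := congrArg Fin.val e; simp at this; omega
    rw [dif_pos h, dif_pos h, Function.update_of_ne hj, Function.update_of_ne hj1]
  · rw [dif_neg h, dif_neg h]

lemma Qt_update_s {n : ℕ} (q : S → X → ℝ) (m : ℕ) (k : Fin n) (hk : m ≤ (k : ℕ))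
    (s : Fin n → S) (a : S) (x : Fin n → X) :
    Qt q m (Function.update s k a) x = Qt q m s x := by
  simp only [Qt]
  refine Finset.prod_congr rfl fun j _ => ?_
  by_cases h : (j : ℕ) < m
  · have hj : j ≠ k := by intro e; have := congrArg Fin.val e; omega
    rw [if_pos h, if_pos h, Function.update_of_ne hj]
  · rw [if_neg h, if_neg h]

lemma Qt_update_x {n : ℕ} (q : S → X → ℝ) (m : ℕ) (k : Fin n) (hk : m ≤ (k : ℕ))
    (s : Fin n → S) (x : Fin n → X) (b : X) :
    Qt q m s (Function.update x k b) = Qt q m s x := by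
  simp only [Qt]
  refine Finset.prod_congr rfl fun j _ => ?_
  by_cases h : (j : ℕ) < m
  · have hj : j ≠ k := by intro e; have := congrArg Fin.val e; omega
    rw [if_pos h, if_pos h, Function.update_of_ne hj]
  · rw [if_neg h, if_neg h]

/-- truncated analogue of `hmmD`. -/
def hmmDt {n : ℕ} (hn : 0 < n) (μ : S → ℝ) (π : S → S → ℝ) (q : S → X → ℝ)
    (K : Finset (Fin n)) (i' i : Fin n) (s₀ : S) (u : Fin n → X) (m : ℕ) (t : S) : ℝ :=
  ∑ s : Fin n → S, ∑ x : Fin n → X,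
    if s i' = s₀ ∧ s i = t ∧ (∀ j ∈ K, (j : ℕ) < (i : ℕ) → x j = u j) then
      μ (s ⟨0, hn⟩) * Tt π m s * Qt q m s x else 0

lemma hmmD_eq_Dt {n : ℕ} (hn : 0 < n) (μ : S → ℝ) (π : S → S → ℝ) (q : S → X → ℝ)
    (K : Finset (Fin n)) (i' i : Fin n) (s₀ : S) (u : Fin n → X) (t : S) :
    hmmD hn μ π q K i' i s₀ u t = hmmDt hn μ π q K i' i s₀ u n t := by
  unfold hmmD hmmDt
  exact Finset.sum_congr rfl fun s _ => Finset.sum_congr rfl fun x _ => by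
    rw [joint_eq_tq hn μ π q s x]

lemma Dt_step {n : ℕ} (hn : 0 < n) (μ : S → ℝ) (π : S → S → ℝ)
    (hπ1 : ∀ t, ∑ t' : S, π t t' = 1) (q : S → X → ℝ) (hq1 : ∀ t, ∑ a : X, q t a = 1)
    (hS : Nonempty S) (K : Finset (Fin n)) (i' i : Fin n) (hii' : (i' : ℕ) < (i : ℕ))
    (s₀ : S) (u : Fin n → X) (m : ℕ) (hm1 : (i : ℕ) < m) (hm2 : m < n) (t : S) :
    hmmDt hn μ π q K i' i s₀ u (m + 1) t
      = ((Fintype.card S : ℝ)⁻¹ * (Fintype.card X : ℝ)⁻¹) * hmmDt hn μ π q K i' i s₀ u m t := by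
  classical
  have hm0 : 0 < m := by omega
  set fm : Fin n := ⟨m, hm2⟩ with hfm
  set pm : Fin n := ⟨m - 1, by omega⟩ with hpm
  have hfmv : (fm : ℕ) = m := rfl
  set A : (Fin n → S) → (Fin n → X) → ℝ := fun s x =>
    if s i' = s₀ ∧ s i = t ∧ (∀ j ∈ K, (j : ℕ) < (i : ℕ) → x j = u j) then
      μ (s ⟨0, hn⟩) * Tt π m s * Qt q m s x * π (s pm) (s fm) else 0 with hA_def
  set B : (Fin n → S) → (Fin n → X) → ℝ := fun s x =>
    if s i' = s₀ ∧ s i = t ∧ (∀ j ∈ K, (j : ℕ) < (i : ℕ) → x j = u j) then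
      μ (s ⟨0, hn⟩) * Tt π m s * Qt q m s x else 0 with hB_def
  have hcondx : ∀ (s : Fin n → S) (x : Fin n → X) (b : X),
      (s i' = s₀ ∧ s i = t ∧ (∀ j ∈ K, (j : ℕ) < (i : ℕ) → Function.update x fm b j = u j))
      ↔ (s i' = s₀ ∧ s i = t ∧ (∀ j ∈ K, (j : ℕ) < (i : ℕ) → x j = u j)) := by
    intro s x b
    refine and_congr Iff.rfl (and_congr Iff.rfl ?_)
    have hne : ∀ j : Fin n, (j : ℕ) < (i : ℕ) → j ≠ fm := by
      intro j hj e; have := congrArg Fin.val e; omega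
    constructor <;> intro h j hj hji
    · have := h j hj hji; rwa [Function.update_of_ne (hne j hji)] at this
    · rw [Function.update_of_ne (hne j hji)]; exact h j hj hji
  have step1 : hmmDt hn μ π q K i' i s₀ u (m + 1) t
      = ∑ s : Fin n → S, ∑ x : Fin n → X, A s x * q (s fm) (x fm) := by
    unfold hmmDt
    refine Finset.sum_congr rfl fun s _ => Finset.sum_congr rfl fun x _ => ?_
    rw [Tt_succ π m hm0 hm2 s, Qt_succ q m hm2 s x]
    simp only [hA_def]
    by_cases h : s i' = s₀ ∧ s i = t ∧ (∀ j ∈ K, (j : ℕ) < (i : ℕ) → x j = u j)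
    · rw [if_pos h, if_pos h]; ring
    · rw [if_neg h, if_neg h, zero_mul]
  have step2 : ∀ s : Fin n → S,
      ∑ x : Fin n → X, A s x * q (s fm) (x fm)
        = (Fintype.card X : ℝ)⁻¹ * ∑ x : Fin n → X, A s x := by
    intro s
    refine elim_one fm (A s) ?_ (q (s fm)) (hq1 (s fm))
    intro x b
    simp only [hA_def]
    refine if_congr (hcondx s x b) ?_ rfl
    rw [Qt_update_x q m fm (le_of_eq hfmv.symm) s x b]
  have step3 : ∀ s : Fin n → S,
      ∑ x : Fin n → X, A s x = (∑ x : Fin n → X, B s x) * π (s pm) (s fm) := by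
    intro s
    rw [Finset.sum_mul]
    refine Finset.sum_congr rfl fun x _ => ?_
    simp only [hA_def, hB_def]
    by_cases h : s i' = s₀ ∧ s i = t ∧ (∀ j ∈ K, (j : ℕ) < (i : ℕ) → x j = u j)
    · rw [if_pos h, if_pos h]
    · rw [if_neg h, if_neg h, zero_mul]
  have step4 : ∑ s : Fin n → S, (∑ x : Fin n → X, B s x) * π (s pm) (s fm)
      = (Fintype.card S : ℝ)⁻¹ * ∑ s : Fin n → S, ∑ x : Fin n → X, B s x := by
    refine elim_two fm pm ?_ (fun s => ∑ x : Fin n → X, B s x) ?_ π hπ1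
    · intro e; have := congrArg Fin.val e; change m - 1 = m at this; omega
    · intro s a
      refine Finset.sum_congr rfl fun x _ => ?_
      simp only [hB_def]
      have hcond : (Function.update s fm a i' = s₀ ∧ Function.update s fm a i = t ∧
          (∀ j ∈ K, (j : ℕ) < (i : ℕ) → x j = u j))
          ↔ (s i' = s₀ ∧ s i = t ∧ (∀ j ∈ K, (j : ℕ) < (i : ℕ) → x j = u j)) := by
        rw [Function.update_of_ne (by intro e; have := congrArg Fin.val e; omega : i' ≠ fm),
          Function.update_of_ne (by intro e; have := congrArg Fin.val e; omega : i ≠ fm)]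
      refine if_congr hcond ?_ rfl
      rw [Function.update_of_ne (by intro e; have := congrArg Fin.val e; simp at this; omega :
          (⟨0, hn⟩ : Fin n) ≠ fm),
        Tt_update π m fm (le_of_eq hfmv.symm) s a, Qt_update_s q m fm (le_of_eq hfmv.symm) s a x]
  rw [step1, Finset.sum_congr rfl fun s _ => step2 s, ← Finset.mul_sum,
    Finset.sum_congr rfl fun s _ => step3 s, step4]
  unfold hmmDt
  simp only [hB_def]
  ring


lemma Dt_ext {n : ℕ} (hn : 0 < n) (μ : S → ℝ) (π : S → S → ℝ) (q : S → X → ℝ)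
    (hq1 : ∀ t, ∑ a : X, q t a = 1) (K : Finset (Fin n)) (i' i : Fin n)
    (hi : 0 < (i : ℕ)) (hii' : (i' : ℕ) = (i : ℕ) - 1) (s₀ : S) (u : Fin n → X) (t : S) :
    hmmDt hn μ π q K i' i s₀ u ((i : ℕ) + 1) t
      = π s₀ t * ((Fintype.card X : ℝ)⁻¹ * hmmDt hn μ π q K i' i s₀ u (i : ℕ) t) := by
  classical
  have hi2 : (i : ℕ) < n := i.isLt
  have hpm : (⟨(i : ℕ) - 1, by omega⟩ : Fin n) = i' := by
    apply Fin.ext; simp [hii']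
  have hfm : (⟨(i : ℕ), hi2⟩ : Fin n) = i := by apply Fin.ext; rfl
  set B : (Fin n → S) → (Fin n → X) → ℝ := fun s x =>
    if s i' = s₀ ∧ s i = t ∧ (∀ j ∈ K, (j : ℕ) < (i : ℕ) → x j = u j) then
      μ (s ⟨0, hn⟩) * Tt π (i : ℕ) s * Qt q (i : ℕ) s x else 0 with hB_def
  have step1 : hmmDt hn μ π q K i' i s₀ u ((i : ℕ) + 1) t
      = ∑ s : Fin n → S, ∑ x : Fin n → X, π s₀ t * (B s x * q (s i) (x i)) := by
    unfold hmmDt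
    refine Finset.sum_congr rfl fun s _ => Finset.sum_congr rfl fun x _ => ?_
    rw [Tt_succ π (i : ℕ) hi hi2 s, Qt_succ q (i : ℕ) hi2 s x, hpm, hfm]
    simp only [hB_def]
    by_cases h : s i' = s₀ ∧ s i = t ∧ (∀ j ∈ K, (j : ℕ) < (i : ℕ) → x j = u j)
    · rw [if_pos h, if_pos h, h.1, h.2.1]; ring
    · rw [if_neg h, if_neg h, zero_mul, mul_zero]
  have step2 : ∀ s : Fin n → S, ∑ x : Fin n → X, B s x * q (s i) (x i)
      = (Fintype.card X : ℝ)⁻¹ * ∑ x : Fin n → X, B s x := by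
    intro s
    refine elim_one i (B s) ?_ (q (s i)) (hq1 (s i))
    intro x b
    simp only [hB_def]
    have hne : ∀ j : Fin n, (j : ℕ) < (i : ℕ) → j ≠ i := by
      intro j hj e; have := congrArg Fin.val e; omega
    have hcond : (s i' = s₀ ∧ s i = t ∧
        (∀ j ∈ K, (j : ℕ) < (i : ℕ) → Function.update x i b j = u j))
        ↔ (s i' = s₀ ∧ s i = t ∧ (∀ j ∈ K, (j : ℕ) < (i : ℕ) → x j = u j)) := by
      refine and_congr Iff.rfl (and_congr Iff.rfl ?_)
      constructor <;> intro h j hj hji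
      · have := h j hj hji; rwa [Function.update_of_ne (hne j hji)] at this
      · rw [Function.update_of_ne (hne j hji)]; exact h j hj hji
    refine if_congr hcond ?_ rfl
    rw [Qt_update_x q (i : ℕ) i le_rfl s x b]
  rw [step1]
  simp_rw [← Finset.mul_sum]
  congr 1
  rw [Finset.sum_congr rfl fun s _ => step2 s, ← Finset.mul_sum]
  rfl

lemma Dt_pin {n : ℕ} (hn : 0 < n) (μ : S → ℝ) (π : S → S → ℝ) (q : S → X → ℝ)
    (K : Finset (Fin n)) (i' i : Fin n) (hi : 0 < (i : ℕ)) (hii' : (i' : ℕ) < (i : ℕ))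
    (s₀ : S) (u : Fin n → X) (t t' : S) :
    hmmDt hn μ π q K i' i s₀ u (i : ℕ) t = hmmDt hn μ π q K i' i s₀ u (i : ℕ) t' := by
  classical
  set C : (Fin n → S) → ℝ := fun s =>
    ∑ x : Fin n → X, if s i' = s₀ ∧ (∀ j ∈ K, (j : ℕ) < (i : ℕ) → x j = u j) then
      μ (s ⟨0, hn⟩) * Tt π (i : ℕ) s * Qt q (i : ℕ) s x else 0 with hC_def
  have reform : ∀ c : S, hmmDt hn μ π q K i' i s₀ u (i : ℕ) c
      = ∑ s : Fin n → S, (if s i = c then C s else 0) := by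
    intro c
    unfold hmmDt
    refine Finset.sum_congr rfl fun s _ => ?_
    by_cases h : s i = c
    · rw [if_pos h]
      simp only [hC_def]
      refine Finset.sum_congr rfl fun x _ => ?_
      by_cases h2 : s i' = s₀ ∧ (∀ j ∈ K, (j : ℕ) < (i : ℕ) → x j = u j)
      · rw [if_pos ⟨h2.1, h, h2.2⟩, if_pos h2]
      · rw [if_neg (by tauto), if_neg h2]
    · rw [if_neg h]
      exact Finset.sum_eq_zero fun x _ => if_neg (by tauto)
  rw [reform t, reform t']
  refine pin_indep i C ?_ t t'
  intro s a
  simp only [hC_def]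
  refine Finset.sum_congr rfl fun x _ => ?_
  have h1 : i' ≠ i := by intro e; have := congrArg Fin.val e; omega
  have h0 : (⟨0, hn⟩ : Fin n) ≠ i := by
    intro e; have := congrArg Fin.val e; simp at this; omega
  rw [Function.update_of_ne h1, Function.update_of_ne h0,
    Tt_update π (i : ℕ) i le_rfl s a, Qt_update_s q (i : ℕ) i le_rfl s a x]

lemma hmmD_prop {n : ℕ} (hn : 0 < n) (μ : S → ℝ) (hμ1 : ∑ t : S, μ t = 1)
    (π : S → S → ℝ) (hπ1 : ∀ t, ∑ t' : S, π t t' = 1)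
    (q : S → X → ℝ) (hq1 : ∀ t, ∑ a : X, q t a = 1)
    (K : Finset (Fin n)) (i' i : Fin n) (hi : 0 < (i : ℕ)) (hii' : (i' : ℕ) = (i : ℕ) - 1)
    (s₀ : S) (u : Fin n → X) :
    ∃ C : ℝ, ∀ t, hmmD hn μ π q K i' i s₀ u t = π s₀ t * C := by
  classical
  have hS : Nonempty S := nonempty_of_sum_one μ hμ1
  have hii'' : (i' : ℕ) < (i : ℕ) := by omega
  have hi2 : (i : ℕ) < n := i.isLt
  set c : ℝ := (Fintype.card S : ℝ)⁻¹ * (Fintype.card X : ℝ)⁻¹ with hc_def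
  have hgen : ∀ d : ℕ, (i : ℕ) + 1 + d ≤ n → ∀ t : S,
      hmmDt hn μ π q K i' i s₀ u ((i : ℕ) + 1 + d) t
        = c ^ d * hmmDt hn μ π q K i' i s₀ u ((i : ℕ) + 1) t := by
    intro d
    induction d with
    | zero => intro _ t; simp
    | succ d ih =>
      intro hd t
      have he : (i : ℕ) + 1 + (d + 1) = ((i : ℕ) + 1 + d) + 1 := by omega
      rw [he, Dt_step hn μ π hπ1 q hq1 hS K i' i hii'' s₀ u ((i : ℕ) + 1 + d)
        (by omega) (by omega) t, ih (by omega) t, ← hc_def]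
      ring
  refine ⟨c ^ (n - (i : ℕ) - 1) * ((Fintype.card X : ℝ)⁻¹
    * hmmDt hn μ π q K i' i s₀ u (i : ℕ) s₀), fun t => ?_⟩
  have hkey := hgen (n - (i : ℕ) - 1) (by omega) t
  rw [show (i : ℕ) + 1 + (n - (i : ℕ) - 1) = n from by omega] at hkey
  rw [hmmD_eq_Dt hn μ π q K i' i s₀ u t, hkey,
    Dt_ext hn μ π q hq1 K i' i hi hii' s₀ u t,
    Dt_pin hn μ π q K i' i hi hii'' s₀ u t s₀]
  ring

lemma prSK_eq_sum {n : ℕ} (hn : 0 < n) (μ : S → ℝ) (π : S → S → ℝ) (q : S → X → ℝ)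
    (K : Finset (Fin n)) (i' i : Fin n) (s₀ : S) (u : Fin n → X) :
    hmmPrSK hn μ π q K i' s₀ u = ∑ t : S, hmmPrSSK hn μ π q K i' i s₀ t u := by
  unfold hmmPrSK hmmPrSSK
  conv_rhs => rw [Finset.sum_comm]
  refine Finset.sum_congr rfl fun s _ => ?_
  conv_rhs => rw [Finset.sum_comm]
  refine Finset.sum_congr rfl fun x _ => ?_
  by_cases h : s i' = s₀ ∧ (∀ j ∈ K, x j = u j)
  · rw [if_pos h]
    have key : ∀ t : S, (if s i' = s₀ ∧ s i = t ∧ (∀ j ∈ K, x j = u j) then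
        hmmJoint hn μ π q s x else 0) = if s i = t then hmmJoint hn μ π q s x else 0 := by
      intro t
      by_cases ht : s i = t
      · rw [if_pos ⟨h.1, ht, h.2⟩, if_pos ht]
      · rw [if_neg (by tauto), if_neg ht]
    rw [Finset.sum_congr rfl fun t _ => key t]
    simp
  · rw [if_neg h]
    exact (Finset.sum_eq_zero fun t _ => if_neg (by tauto)).symm



/-- hidden-state transition identity under sensitive conditioning: for a
hidden Markov model with initial distribution `μ`, transitions `π` and emissions `q`, for
every `2 ≤ i ≤ n` (zero-based: `0 < i`), all states `s₀, s₁` and every `u` with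
`P(S_{i-1} = s₀, X_K = u) > 0`:
`P(S_i = s₁ | S_{i-1} = s₀, X_K = u) = π(s₀, s₁) γ^{(i)}(u, s₁) / ∑_t π(s₀, t) γ^{(i)}(u, t)`,
where `γ^{(i)}(u, t) = P(X_{K_{i+}} = u_+ | S_i = t)`. -/
theorem hmm_transition_identity {n : ℕ} (hn : 0 < n)
    (μ : S → ℝ) (hμ0 : ∀ t, 0 ≤ μ t) (hμ1 : ∑ t : S, μ t = 1)
    (π : S → S → ℝ) (hπ0 : ∀ t t', 0 ≤ π t t') (hπ1 : ∀ t, ∑ t' : S, π t t' = 1)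
    (q : S → X → ℝ) (hq0 : ∀ t a, 0 ≤ q t a) (hq1 : ∀ t, ∑ a : X, q t a = 1)
    (K : Finset (Fin n))
    (hposS : ∀ (i : Fin n) (t : S), 0 < hmmPrS hn μ π q i t)
    (i : Fin n) (hi : 0 < (i : ℕ)) (s₀ s₁ : S) (u : Fin n → X)
    (hpos : 0 < hmmPrSK hn μ π q K ⟨(i : ℕ) - 1, by omega⟩ s₀ u) :
    hmmPrSSK hn μ π q K ⟨(i : ℕ) - 1, by omega⟩ i s₀ s₁ u
        / hmmPrSK hn μ π q K ⟨(i : ℕ) - 1, by omega⟩ s₀ u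
      = π s₀ s₁ * hmmGamma hn μ π q K i u s₁
          / ∑ t : S, π s₀ t * hmmGamma hn μ π q K i u t := by
  classical
  have hin : (i : ℕ) < n := i.isLt
  set i' : Fin n := ⟨(i : ℕ) - 1, by omega⟩ with hi'def
  have hii'lt : (i' : ℕ) < (i : ℕ) := by
    simp only [hi'def]; omega
  have hii'eq : (i' : ℕ) = (i : ℕ) - 1 := rfl
  obtain ⟨C, hC⟩ := hmmD_prop hn μ hμ1 π hπ1 q hq1 K i' i hi hii'eq s₀ u
  have h2 : ∀ t, hmmPrSSK hn μ π q K i' i s₀ t u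
      = C * (π s₀ t * hmmGamma hn μ π q K i u t) := by
    intro t
    have h1 := prSSK_mul_prS hn μ π q K i' i hii'lt s₀ t u
    have hne := (hposS i t).ne'
    have hstep : hmmPrSSK hn μ π q K i' i s₀ t u
        = (hmmD hn μ π q K i' i s₀ u t * hmmPrKplusS hn μ π q K i u t)
            / hmmPrS hn μ π q i t := by
      rw [← h1, mul_div_cancel_right₀ _ hne]
    rw [hstep, hmmGamma, hC t]
    ring
  have h5 : hmmPrSK hn μ π q K i' s₀ u
      = C * ∑ t : S, π s₀ t * hmmGamma hn μ π q K i u t := by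
    rw [prSK_eq_sum hn μ π q K i' i s₀ u, Finset.mul_sum]
    exact Finset.sum_congr rfl fun t _ => h2 t
  rw [h2 s₁, h5]
  have hpos' : 0 < C * ∑ t : S, π s₀ t * hmmGamma hn μ π q K i u t := by
    rw [← h5]; exact hpos
  have hCne : C ≠ 0 := by
    intro h; rw [h, zero_mul] at hpos'; exact lt_irrefl 0 hpos'
  exact mul_div_mul_left _ _ hCne


end GenotypeHiding
end
end
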